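/- Let G=(V,E) be a d-manifold and let ψ:V→ℂ with Re ψ and Im ψ nowhere zero on V. Then for each of the 6 two-element subsets e of U={1+i,1−i,−1+i,−1−i}, the level set {ψ=0}_e is either the empty graph or a (d−2)-manifold. -/

import Mathlib

open scoped Classical

/-- A finite simple graph: a finite vertex set together with a symmetric, irreflexive
adjacency relation supported on the vertex set. -/
structure FGraph (V : Type) where
  verts : Finset V
  Adj : V → V → Prop
  symm : ∀ {a b}, Adj a b → Adj b a
  loopless : ∀ a, ¬ Adj a a
  mem_of_adj : ∀ {a b}, Adj a b → a ∈ verts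

namespace FGraph

variable {V W : Type}

/-- The subgraph induced on the vertices satisfying `P`. -/
noncomputable def induce (G : FGraph V) (P : V → Prop) : FGraph V where
  verts := G.verts.filter P
  Adj a b := G.Adj a b ∧ P a ∧ P b
  symm h := ⟨G.symm h.1, h.2.2, h.2.1⟩
  loopless a h := G.loopless a h.1
  mem_of_adj h := Finset.mem_filter.mpr ⟨G.mem_of_adj h.1, h.2.1⟩

/-- The unit sphere of a vertex: the subgraph induced on its neighbors. -/
noncomputable def unitSphere (G : FGraph V) (v : V) : FGraph V :=
  G.induce (fun w => G.Adj v w)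

/-- The graph with the vertex `v` (and its edges) removed. -/
noncomputable def erase (G : FGraph V) (v : V) : FGraph V :=
  G.induce (fun w => w ≠ v)

/-- Inductive definition of contractibility: the one-point graph is contractible, and a
graph is contractible if some vertex has a contractible unit sphere and contractible
complement. -/
inductive Contractible : FGraph V → Prop
  | single (G : FGraph V) (v : V) (h : G.verts = {v}) : Contractible G
  | step (G : FGraph V) (v : V) (hv : v ∈ G.verts)
      (h1 : Contractible (G.unitSphere v)) (h2 : Contractible (G.erase v)) :
      Contractible G

mutual
  /-- `G` is a `d`-sphere: the empty graph is the `(-1)`-sphere, and a `d`-manifold is a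
  `d`-sphere if removing some vertex renders it contractible. -/
  inductive IsSphere : ℤ → FGraph V → Prop
    | empty (G : FGraph V) (h : G.verts = ∅) : IsSphere (-1) G
    | punctured (d : ℤ) (G : FGraph V) (hm : IsManifold d G) (v : V) (hv : v ∈ G.verts)
        (hc : Contractible (G.erase v)) : IsSphere d G
  /-- For `d ≥ 0`, `G` is a `d`-manifold iff every unit sphere is a `(d-1)`-sphere. -/
  inductive IsManifold : ℤ → FGraph V → Prop
    | intro (d : ℤ) (hd : 0 ≤ d) (G : FGraph V)
        (h : ∀ v ∈ G.verts, IsSphere (d - 1) (G.unitSphere v)) : IsManifold d G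
end

/-- A simplex of `G`: the vertex set of a complete subgraph. -/
def IsSimplex (G : FGraph V) (x : Finset V) : Prop :=
  x.Nonempty ∧ ↑x ⊆ G.verts ∧ ∀ a ∈ x, ∀ b ∈ x, a ≠ b → G.Adj a b

/-- The Barycentric refinement: vertices are the simplices of `G`, two being adjacent iff
one is strictly contained in the other. -/
noncomputable def barycentric (G : FGraph V) : FGraph (Finset V) where
  verts := G.verts.powerset.filter (fun x => G.IsSimplex x)
  Adj x y := G.IsSimplex x ∧ G.IsSimplex y ∧ (x ⊂ y ∨ y ⊂ x)
  symm h := ⟨h.2.1, h.1, h.2.2.symm⟩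
  loopless x h := by rcases h.2.2 with h' | h' <;> exact (ssubset_irrefl x h')
  mem_of_adj h := Finset.mem_filter.mpr ⟨Finset.mem_powerset.mpr h.1.2.1, h.1⟩

/-- Number of simplices of `G` with exactly `j` vertices (so `numSimplices G (k+1)` is
the `f`-vector entry `f_k(G)`). -/
noncomputable def numSimplices (G : FGraph V) (j : ℕ) : ℕ :=
  (G.verts.powerset.filter (fun x => G.IsSimplex x ∧ x.card = j)).card

/-- Euler characteristic `χ(G) = Σ_{k ≥ 0} (-1)^k f_k(G)`, where `f_k` counts the
simplices with `k+1` vertices. -/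
noncomputable def euler (G : FGraph V) : ℤ :=
  ∑ k ∈ Finset.range G.verts.card, (-1 : ℤ) ^ k * G.numSimplices (k + 1)

/-- The level set `{f = c}`: the subgraph of the Barycentric refinement induced by the
simplices on which `f - c` changes sign. -/
noncomputable def levelSet (G : FGraph V) (f : V → ℝ) (c : ℝ) : FGraph (Finset V) :=
  G.barycentric.induce (fun x => (∃ a ∈ x, f a - c < 0) ∧ (∃ b ∈ x, 0 < f b - c))

/-- Graph isomorphism. -/
def Iso (G : FGraph V) (H : FGraph W) : Prop :=
  ∃ φ : V → W, Set.BijOn φ ↑G.verts ↑H.verts ∧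
    ∀ a ∈ G.verts, ∀ b ∈ G.verts, (G.Adj a b ↔ H.Adj (φ a) (φ b))

/-- Zykov join of two graphs: disjoint union plus all edges between the two parts. -/
noncomputable def join (G : FGraph V) (H : FGraph W) : FGraph (V ⊕ W) where
  verts := G.verts.disjSum H.verts
  Adj a b :=
    match a, b with
    | .inl a, .inl b => G.Adj a b
    | .inr a, .inr b => H.Adj a b
    | .inl a, .inr b => a ∈ G.verts ∧ b ∈ H.verts
    | .inr a, .inl b => b ∈ G.verts ∧ a ∈ H.verts
  symm {a b} h := by
    cases a <;> cases b <;> simp_all <;> first | exact G.symm h | exact H.symm h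
  loopless a h := by
    cases a <;> simp_all <;> first | exact G.loopless _ h | exact H.loopless _ h
  mem_of_adj {a b} h := by
    cases a <;> cases b <;> simp_all [Finset.mem_disjSum] <;>
      first | exact G.mem_of_adj h | exact H.mem_of_adj h

/-- Union of two graphs on the same vertex type. -/
noncomputable def union (G H : FGraph V) : FGraph V where
  verts := G.verts ∪ H.verts
  Adj a b := G.Adj a b ∨ H.Adj a b
  symm h := h.imp G.symm H.symm
  loopless a h := h.elim (G.loopless a) (H.loopless a)
  mem_of_adj h :=
    h.elim (fun h' => Finset.mem_union_left _ (G.mem_of_adj h'))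
      (fun h' => Finset.mem_union_right _ (H.mem_of_adj h'))

/-- A `d`-ball: a graph of the form `S - v` for a `d`-sphere `S` and a vertex `v` of `S`
(up to graph isomorphism). -/
def IsBall (d : ℤ) (H : FGraph W) : Prop :=
  ∃ (S : FGraph ℕ) (v : ℕ), IsSphere d S ∧ v ∈ S.verts ∧ Iso H (S.erase v)

/-- A `d`-manifold with boundary: every unit sphere is a `(d-1)`-sphere or a `(d-1)`-ball. -/
def IsManifoldWithBoundary (d : ℤ) (G : FGraph V) : Prop :=
  ∀ v ∈ G.verts, IsSphere (d - 1) (G.unitSphere v) ∨ IsBall (d - 1) (G.unitSphere v)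

/-- The cyclic graph `C_n` on the vertex set `Fin n`. -/
def cycleGraph (n : ℕ) : FGraph (Fin n) where
  verts := Finset.univ
  Adj a b := a ≠ b ∧ ((a.val + 1) % n = b.val ∨ (b.val + 1) % n = a.val)
  symm h := ⟨h.1.symm, h.2.symm⟩
  loopless a h := h.1 rfl
  mem_of_adj _ := Finset.mem_univ _

/-- `G` is a disjoint union of cyclic graphs `C_n` with `n ≥ 4`: the vertex set splits
into pairwise disjoint pieces, edges never cross between pieces, and each piece induces
a graph isomorphic to a `C_n` with `n ≥ 4`. -/
def IsDisjointUnionOfCycles (G : FGraph V) : Prop :=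
  ∃ P : Finset (Finset V),
    (∀ S ∈ P, ↑S ⊆ G.verts) ∧
    (∀ S ∈ P, ∀ T ∈ P, S ≠ T → Disjoint S T) ∧
    (∀ v ∈ G.verts, ∃ S ∈ P, v ∈ S) ∧
    (∀ a b, G.Adj a b → ∀ S ∈ P, a ∈ S → b ∈ S) ∧
    (∀ S ∈ P, ∃ n, 4 ≤ n ∧ Iso (G.induce (· ∈ S)) (cycleGraph n))

/-- Poincaré–Hopf index `i_f(v) = 1 - χ(S^-_f(v))`. -/
noncomputable def pindex (G : FGraph V) (f : V → ℝ) (v : V) : ℤ :=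
  1 - ((G.unitSphere v).induce (fun w => f w < f v)).euler

/-- Curvature `K(v) = Σ_{k ≥ 0} (-1)^k f_{k-1}(S(v))/(k+1)` with `f_{-1} = 1`. -/
noncomputable def curvature (G : FGraph V) (v : V) : ℝ :=
  ∑ k ∈ Finset.range (G.verts.card + 1),
    (-1 : ℝ) ^ k * (if k = 0 then 1 else ((G.unitSphere v).numSimplices k : ℝ)) / (k + 1)

end FGraph

/-- `sign(a + i b) = sign(a) + i sign(b)`. -/
noncomputable def csgn (z : ℂ) : ℂ :=
  ⟨Real.sign z.re, Real.sign z.im⟩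

/-- The set `U = {1+i, 1-i, -1+i, -1-i}` of possible values of `csgn`. -/
noncomputable def signU : Finset ℂ :=
  {1 + Complex.I, 1 - Complex.I, -1 + Complex.I, -1 - Complex.I}

namespace FGraph

variable {V : Type}

/-- The set of values of `sign(ψ - c)` attained on the finite vertex set `x`. -/
noncomputable def signValues (ψ : V → ℂ) (c : ℂ) (x : Finset V) : Finset ℂ :=
  x.image (fun v => csgn (ψ v - c))

/-- The level set `{ψ = c}` of a complex-valued function: the subgraph of the Barycentric
refinement induced by the simplices on which `sign(ψ - c)` takes at least three distinct
values, including `-1+i` and `1-i`. -/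
noncomputable def complexLevelSet (G : FGraph V) (ψ : V → ℂ) (c : ℂ) : FGraph (Finset V) :=
  G.barycentric.induce (fun x =>
    3 ≤ (signValues ψ c x).card ∧
    (-1 + Complex.I) ∈ signValues ψ c x ∧ (1 - Complex.I) ∈ signValues ψ c x)

/-- The level set `{ψ = 0}_e` for a two-element subset `e ⊆ U`: the subgraph of the
Barycentric refinement induced by the simplices on which `sign(ψ)` attains both values
of `e` and at least three distinct values in total. -/
noncomputable def complexLevelSetE (G : FGraph V) (ψ : V → ℂ) (e : Finset ℂ) :
    FGraph (Finset V) :=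
  G.barycentric.induce (fun x =>
    (∀ u ∈ e, u ∈ signValues ψ 0 x) ∧ 3 ≤ (signValues ψ 0 x).card)

/-- `Ψ^{-1}(t)`: the subgraph of the Barycentric refinement induced by the simplices on
which `sign(ψ)` attains all values of `t`. -/
noncomputable def signPreimage (G : FGraph V) (ψ : V → ℂ) (t : Finset ℂ) :
    FGraph (Finset V) :=
  G.barycentric.induce (fun x => ∀ u ∈ t, u ∈ signValues ψ 0 x)

/-- The sign vectors of `F - c` attained on the finite vertex set `x`. -/
noncomputable def vecSignValues {k : ℕ} (F : V → Fin k → ℝ) (c : Fin k → ℝ)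
    (x : Finset V) : Finset (Fin k → ℝ) :=
  x.image (fun v j => Real.sign (F v j - c j))

/-- The level set `{F = c}` of an `ℝ^k`-valued function: the subgraph of the Barycentric
refinement induced by the simplices on which the sign vector of `F - c` takes at least
`k+1` distinct values, including the `k` vectors `(1,…,1,-1,1,…,1)`. -/
noncomputable def vecLevelSet (G : FGraph V) {k : ℕ} (F : V → Fin k → ℝ) (c : Fin k → ℝ) :
    FGraph (Finset V) :=
  G.barycentric.induce (fun x =>
    k + 1 ≤ (vecSignValues F c x).card ∧
    ∀ j : Fin k, (fun i => if i = j then (-1 : ℝ) else 1) ∈ vecSignValues F c x)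

end FGraph

/-- The complete graph on `Fin n`. -/
def completeFGraph (n : ℕ) : FGraph (Fin n) where
  verts := Finset.univ
  Adj a b := a ≠ b
  symm h := h.symm
  loopless a h := h rfl
  mem_of_adj _ := Finset.mem_univ _

/-- Stirling numbers of the second kind. -/
def stirling2 : ℕ → ℕ → ℕ
  | 0, 0 => 1
  | 0, _ + 1 => 0
  | _ + 1, 0 => 0
  | n + 1, m + 1 => (m + 1) * stirling2 n (m + 1) + stirling2 n m


namespace MS
open FGraph

variable {V : Type}

theorem fext {G H : FGraph V} (hv : G.verts = H.verts)
    (ha : ∀ a b, G.Adj a b ↔ H.Adj a b) : G = H := by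
  cases G; cases H
  simp only [FGraph.mk.injEq]
  exact ⟨hv, funext fun a => funext fun b => propext (ha a b)⟩

/-- comparability of finsets -/
def cmp (y z : Finset V) : Prop := y ⊂ z ∨ z ⊂ y

theorem cmp_symm {y z : Finset V} (h : cmp y z) : cmp z y := h.symm

theorem cmp_irrefl (y : Finset V) : ¬ cmp y y := by
  rintro (h | h) <;> exact ssubset_irrefl _ h

/-- the inclusion graph on a family of finsets -/
noncomputable def inclG (A : Finset (Finset V)) : FGraph (Finset V) where
  verts := A
  Adj y z := y ∈ A ∧ z ∈ A ∧ cmp y z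
  symm h := ⟨h.2.1, h.1, h.2.2.symm⟩
  loopless y h := cmp_irrefl y h.2.2
  mem_of_adj h := h.1

@[simp] theorem inclG_verts (A : Finset (Finset V)) : (inclG A).verts = A := rfl

theorem inclG_adj {A : Finset (Finset V)} {y z : Finset V} :
    (inclG A).Adj y z ↔ y ∈ A ∧ z ∈ A ∧ cmp y z := Iff.rfl

theorem inclG_unitSphere {A : Finset (Finset V)} {y : Finset V} (hy : y ∈ A) :
    (inclG A).unitSphere y = inclG (A.filter (fun z => cmp y z)) := by
  apply fext
  · show A.filter _ = A.filter _
    apply Finset.filter_congr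
    intro z hz
    simp only [inclG_adj]
    constructor
    · rintro ⟨_, _, h⟩; exact h
    · intro h; exact ⟨hy, hz, h⟩
  · intro a b
    show (inclG A).Adj a b ∧ (inclG A).Adj y a ∧ (inclG A).Adj y b ↔ _
    simp only [inclG_adj, Finset.mem_filter]
    constructor
    · rintro ⟨⟨ha, hb, hab⟩, ⟨_, _, hya⟩, ⟨_, _, hyb⟩⟩
      exact ⟨⟨ha, hya⟩, ⟨hb, hyb⟩, hab⟩
    · rintro ⟨⟨ha, hya⟩, ⟨hb, hyb⟩, hab⟩
      exact ⟨⟨ha, hb, hab⟩, ⟨hy, ha, hya⟩, ⟨hy, hb, hyb⟩⟩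

theorem inclG_erase (A : Finset (Finset V)) (y : Finset V) :
    (inclG A).erase y = inclG (A.erase y) := by
  apply fext
  · ext z
    simp only [FGraph.erase, FGraph.induce, inclG_verts, Finset.mem_filter,
      Finset.mem_erase]
    tauto
  · intro a b
    show (inclG A).Adj a b ∧ a ≠ y ∧ b ≠ y ↔ _
    simp only [inclG_adj, Finset.mem_erase]
    tauto

theorem contr_single {A : Finset (Finset V)} {v : Finset V} (h : A = {v}) :
    Contractible (inclG A) :=
  Contractible.single _ v (by simp [h])

/-- every element of A is comparable to every element of B -/
def Cross (A B : Finset (Finset V)) : Prop := ∀ a ∈ A, ∀ b ∈ B, cmp a b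

theorem Cross.symm {A B : Finset (Finset V)} (h : Cross A B) : Cross B A :=
  fun b hb a ha => (h a ha b hb).symm

theorem Cross.disjoint {A B : Finset (Finset V)} (h : Cross A B) : Disjoint A B := by
  rw [Finset.disjoint_left]
  intro a ha hb
  exact cmp_irrefl a (h a ha a hb)

theorem Cross.mono {A B A' B' : Finset (Finset V)} (h : Cross A B)
    (hA : A' ⊆ A) (hB : B' ⊆ B) : Cross A' B' :=
  fun a ha b hb => h a (hA ha) b (hB hb)

theorem cross_below {A B : Finset (Finset V)} (h : ∀ a ∈ A, ∀ b ∈ B, a ⊂ b) :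
    Cross A B := fun a ha b hb => Or.inl (h a ha b hb)

/-- unit sphere inside a "join" splits -/
theorem join_unitSphere_left {A B : Finset (Finset V)} (hAB : Cross A B)
    {y : Finset V} (hy : y ∈ A) :
    (inclG (A ∪ B)).unitSphere y = inclG ((A.filter (fun z => cmp y z)) ∪ B) := by
  rw [inclG_unitSphere (Finset.mem_union_left _ hy)]
  congr 1
  ext z
  simp only [Finset.mem_filter, Finset.mem_union]
  constructor
  · rintro ⟨hz | hz, hc⟩
    · exact Or.inl ⟨hz, hc⟩
    · exact Or.inr hz
  · rintro (⟨hz, hc⟩ | hz)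
    · exact ⟨Or.inl hz, hc⟩
    · exact ⟨Or.inr hz, hAB y hy z hz⟩

theorem join_unitSphere_right {A B : Finset (Finset V)} (hAB : Cross A B)
    {y : Finset V} (hy : y ∈ B) :
    (inclG (A ∪ B)).unitSphere y = inclG (A ∪ (B.filter (fun z => cmp y z))) := by
  rw [inclG_unitSphere (Finset.mem_union_right _ hy)]
  congr 1
  ext z
  simp only [Finset.mem_filter, Finset.mem_union]
  constructor
  · rintro ⟨hz | hz, hc⟩
    · exact Or.inl hz
    · exact Or.inr ⟨hz, hc⟩
  · rintro (hz | ⟨hz, hc⟩)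
    · exact ⟨Or.inl hz, (hAB z hz y hy).symm⟩
    · exact ⟨Or.inr hz, hc⟩

theorem join_erase_left {A B : Finset (Finset V)} (hAB : Cross A B) {y : Finset V}
    (hy : y ∈ A) : (inclG (A ∪ B)).erase y = inclG ((A.erase y) ∪ B) := by
  rw [inclG_erase]
  congr 1
  ext z
  simp only [Finset.mem_erase, Finset.mem_union]
  constructor
  · rintro ⟨hne, hz | hz⟩
    · exact Or.inl ⟨hne, hz⟩
    · exact Or.inr hz
  · rintro (⟨hne, hz⟩ | hz)
    · exact ⟨hne, Or.inl hz⟩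
    · refine ⟨?_, Or.inr hz⟩
      rintro rfl
      exact cmp_irrefl z (hAB z hy z hz)

end MS

namespace MS
open FGraph

variable {V : Type}

theorem filter_cmp_card_lt {A : Finset (Finset V)} {w : Finset V} (hw : w ∈ A) :
    (A.filter (fun z => cmp w z)).card < A.card := by
  apply Finset.card_lt_card
  constructor
  · exact Finset.filter_subset _ _
  · intro hsub
    have := Finset.mem_filter.mp (hsub hw)
    exact cmp_irrefl w this.2

theorem erase_card_lt {A : Finset (Finset V)} {w : Finset V} (hw : w ∈ A) :
    (A.erase w).card < A.card := Finset.card_erase_lt_of_mem hw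

/-- a cone (apex comparable with everything) is contractible -/
theorem cone_contr : ∀ (n : ℕ) (B : Finset (Finset V)) (v : Finset V), B.card ≤ n →
    (∀ b ∈ B, cmp v b) → Contractible (inclG (insert v B)) := by
  intro n
  induction n with
  | zero =>
    intro B v hB _
    have : B = ∅ := Finset.card_eq_zero.mp (Nat.le_zero.mp hB)
    subst this
    exact contr_single (v := v) (by simp)
  | succ n ih =>
    intro B v hB hv
    rcases Finset.eq_empty_or_nonempty B with rfl | ⟨w, hw⟩
    · exact contr_single (v := v) (by simp)
    have hvB : v ∉ B := fun h => cmp_irrefl v (hv v h)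
    have hvw : v ≠ w := fun h => hvB (h ▸ hw)
    have hwmem : w ∈ insert v B := Finset.mem_insert_of_mem hw
    apply Contractible.step _ w hwmem
    · rw [inclG_unitSphere hwmem]
      have hfe : (insert v B).filter (fun z => cmp w z) =
          insert v (B.filter (fun z => cmp w z)) := by
        ext z
        simp only [Finset.mem_filter, Finset.mem_insert]
        constructor
        · rintro ⟨rfl | hz, hc⟩
          · exact Or.inl rfl
          · exact Or.inr ⟨hz, hc⟩
        · rintro (rfl | ⟨hz, hc⟩)
          · exact ⟨Or.inl rfl, (hv w hw).symm⟩
          · exact ⟨Or.inr hz, hc⟩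
      rw [hfe]
      apply ih
      · have hlt : (B.filter (fun z => cmp w z)).card < B.card := filter_cmp_card_lt hw
        omega
      · intro b hb
        exact hv b (Finset.mem_filter.mp hb).1
    · rw [inclG_erase]
      have : (insert v B).erase w = insert v (B.erase w) := by
        ext z
        simp only [Finset.mem_erase, Finset.mem_insert]
        constructor
        · rintro ⟨hne, rfl | hz⟩
          · exact Or.inl rfl
          · exact Or.inr ⟨hne, hz⟩
        · rintro (rfl | ⟨hne, hz⟩)
          · exact ⟨hvw, Or.inl rfl⟩
          · exact ⟨hne, Or.inr hz⟩
      rw [this]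
      apply ih
      · have := erase_card_lt hw
        omega
      · intro b hb
        exact hv b (Finset.mem_erase.mp hb).2

/-- join with a contractible factor is contractible -/
theorem contr_join_aux {G : FGraph (Finset V)} (h : Contractible G) :
    ∀ (A B : Finset (Finset V)), G = inclG A → Cross A B →
      Contractible (inclG (A ∪ B)) := by
  induction h with
  | single G v hv =>
    intro A B hG hc
    have hA : A = {v} := by rw [hG] at hv; exact hv
    subst hA
    have : ({v} : Finset (Finset V)) ∪ B = insert v B := by
      ext z; simp [Finset.mem_insert]
    rw [this]
    exact cone_contr B.card B v le_rfl (fun b hb => hc v (Finset.mem_singleton_self v) b hb)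
  | step G v hv h1 h2 ih1 ih2 =>
    intro A B hG hc
    subst hG
    have hvA : v ∈ A := hv
    have hvAB : v ∈ A ∪ B := Finset.mem_union_left _ hvA
    apply Contractible.step _ v hvAB
    · rw [join_unitSphere_left hc hvA]
      exact ih1 _ B (inclG_unitSphere hvA) (hc.mono (Finset.filter_subset _ _) le_rfl)
    · rw [join_erase_left hc hvA]
      exact ih2 _ B (inclG_erase A v) (hc.mono (Finset.erase_subset _ _) le_rfl)

theorem contr_join_left {A B : Finset (Finset V)} (hc : Cross A B)
    (h : Contractible (inclG A)) : Contractible (inclG (A ∪ B)) :=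
  contr_join_aux h A B rfl hc

theorem contr_join_right {A B : Finset (Finset V)} (hc : Cross A B)
    (h : Contractible (inclG B)) : Contractible (inclG (A ∪ B)) := by
  rw [Finset.union_comm]
  exact contr_join_left hc.symm h

/-- inversion for spheres -/
theorem sphere_cases {W : Type} {d : ℤ} {G : FGraph W} (h : IsSphere d G) :
    (d = -1 ∧ G.verts = ∅) ∨
      (IsManifold d G ∧ ∃ v ∈ G.verts, Contractible (G.erase v)) := by
  cases h with
  | empty _ h => exact Or.inl ⟨rfl, h⟩
  | punctured d _ hm v hv hc => exact Or.inr ⟨hm, v, hv, hc⟩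

theorem manifold_cases {W : Type} {d : ℤ} {G : FGraph W} (h : IsManifold d G) :
    0 ≤ d ∧ ∀ v ∈ G.verts, IsSphere (d - 1) (G.unitSphere v) := by
  cases h with
  | intro _ hd _ h => exact ⟨hd, h⟩

theorem sphere_dim_ge {W : Type} {d : ℤ} {G : FGraph W} (h : IsSphere d G) :
    -1 ≤ d := by
  rcases sphere_cases h with ⟨rfl, _⟩ | ⟨hm, _⟩
  · exact le_rfl
  · have := (manifold_cases hm).1; omega

theorem empty_sphere {A : Finset (Finset V)} (h : A = ∅) : IsSphere (-1) (inclG A) :=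
  IsSphere.empty _ (by simp [h])

/-- join of spheres is a sphere -/
theorem sphere_join_aux : ∀ (n : ℕ) (A B : Finset (Finset V)) (p q : ℤ),
    A.card + B.card ≤ n → Cross A B →
    IsSphere p (inclG A) → IsSphere q (inclG B) →
    IsSphere (p + q + 1) (inclG (A ∪ B)) := by
  intro n
  induction n with
  | zero =>
    intro A B p q hn _ hA hB
    have hA0 : A = ∅ := Finset.card_eq_zero.mp (by omega)
    have hB0 : B = ∅ := Finset.card_eq_zero.mp (by omega)
    rcases sphere_cases hA with ⟨rfl, _⟩ | ⟨_, v, hv, _⟩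
    · rcases sphere_cases hB with ⟨rfl, _⟩ | ⟨_, w, hw, _⟩
      · have : (-1 : ℤ) + -1 + 1 = -1 := by ring
        rw [this]
        exact empty_sphere (by simp [hA0, hB0])
      · rw [hB0] at hw; simp at hw
    · rw [hA0] at hv; simp at hv
  | succ n ih =>
    intro A B p q hn hc hA hB
    rcases sphere_cases hA with ⟨rfl, hAe⟩ | ⟨hmA, vA, hvA, hcA⟩
    · have hA0 : A = ∅ := hAe
      have : (-1 : ℤ) + q + 1 = q := by ring
      rw [this, hA0, Finset.empty_union]
      exact hB
    rcases sphere_cases hB with ⟨rfl, hBe⟩ | ⟨hmB, vB, hvB, hcB⟩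
    · have hB0 : B = ∅ := hBe
      have : p + -1 + 1 = p := by ring
      rw [this, hB0, Finset.union_empty]
      exact hA
    have hp0 : 0 ≤ p := (manifold_cases hmA).1
    have hq0 : 0 ≤ q := (manifold_cases hmB).1
    apply IsSphere.punctured _ _ ?_ vA (Finset.mem_union_left _ hvA) ?_
    · -- manifold
      apply IsManifold.intro _ (by omega)
      intro w hw
      rcases Finset.mem_union.mp hw with hwA | hwB
      · rw [join_unitSphere_left hc hwA]
        have hS : IsSphere (p - 1) (inclG (A.filter (fun z => cmp w z))) := by
          have := (manifold_cases hmA).2 w hwA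
          rwa [inclG_unitSphere hwA] at this
        have : p + q + 1 - 1 = (p - 1) + q + 1 := by ring
        rw [this]
        apply ih _ _ _ _ ?_ (hc.mono (Finset.filter_subset _ _) le_rfl) hS hB
        have := filter_cmp_card_lt hwA
        omega
      · rw [join_unitSphere_right hc hwB]
        have hS : IsSphere (q - 1) (inclG (B.filter (fun z => cmp w z))) := by
          have := (manifold_cases hmB).2 w hwB
          rwa [inclG_unitSphere hwB] at this
        have : p + q + 1 - 1 = p + (q - 1) + 1 := by ring
        rw [this]
        apply ih _ _ _ _ ?_ (hc.mono le_rfl (Finset.filter_subset _ _)) hA hS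
        have := filter_cmp_card_lt hwB
        omega
    · -- punctured
      rw [join_erase_left hc hvA]
      apply contr_join_left (hc.mono (Finset.erase_subset _ _) le_rfl)
      rwa [inclG_erase A vA] at hcA

theorem sphere_join {A B : Finset (Finset V)} {p q : ℤ} (hc : Cross A B)
    (hA : IsSphere p (inclG A)) (hB : IsSphere q (inclG B)) :
    IsSphere (p + q + 1) (inclG (A ∪ B)) :=
  sphere_join_aux (A.card + B.card) A B p q le_rfl hc hA hB

end MS

namespace MS
open FGraph

variable {V : Type}

theorem ssub_sdiff {b u T : Finset V} (hbu : b ⊂ u) (huT : u ⊆ T) :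
    T \ u ⊂ T \ b := by
  constructor
  · intro x hx
    rcases Finset.mem_sdiff.mp hx with ⟨hxT, hxu⟩
    exact Finset.mem_sdiff.mpr ⟨hxT, fun hxb => hxu (hbu.1 hxb)⟩
  · intro hsub
    obtain ⟨x, hxu, hxb⟩ := Finset.exists_of_ssubset hbu
    have hxT : x ∈ T := huT hxu
    have : x ∈ T \ u := hsub (Finset.mem_sdiff.mpr ⟨hxT, hxb⟩)
    exact (Finset.mem_sdiff.mp this).2 hxu

/-- an upward closed family (with its top) is contractible -/
theorem up_contr : ∀ (k m : ℕ) (b T : Finset V) (U : Finset (Finset V)),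
    (T \ b).card ≤ k → U.card ≤ m →
    (∀ z ∈ U, b ⊂ z ∧ z ⊆ T) →
    (∀ z ∈ U, ∀ z', z ⊆ z' → z' ⊆ T → z' ∈ U) →
    T ∈ U →
    Contractible (inclG U) := by
  intro k
  induction k with
  | zero =>
    intro m b T U hk _ hmem _ hT
    obtain ⟨hbT, _⟩ := hmem T hT
    obtain ⟨x, hxT, hxb⟩ := Finset.exists_of_ssubset hbT
    have h1 : 0 < (T \ b).card :=
      Finset.card_pos.mpr ⟨x, Finset.mem_sdiff.mpr ⟨hxT, hxb⟩⟩
    omega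
  | succ k ihk =>
    intro m
    induction m with
    | zero =>
      intro b T U _ hm _ _ hT
      have : U = ∅ := Finset.card_eq_zero.mp (by omega)
      rw [this] at hT; simp at hT
    | succ m ihm =>
      intro b T U hk hm hmem hup hT
      obtain ⟨u, hu, humin⟩ := Finset.exists_min_image U Finset.card ⟨T, hT⟩
      by_cases huT : u = T
      · -- all elements equal T
        have : U = {T} := by
          apply Finset.eq_singleton_iff_unique_mem.mpr
          refine ⟨hT, fun z hz => ?_⟩
          have h1 : z ⊆ T := (hmem z hz).2
          have h2 : T.card ≤ z.card := huT ▸ humin z hz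
          exact Finset.eq_of_subset_of_card_le h1 h2
        exact contr_single this
      · have hbu : b ⊂ u := (hmem u hu).1
        have huT' : u ⊆ T := (hmem u hu).2
        have huT'' : u ⊂ T := Finset.ssubset_iff_subset_ne.mpr ⟨huT', huT⟩
        apply Contractible.step _ u hu
        · rw [inclG_unitSphere hu]
          have hfe : U.filter (fun z => cmp u z) =
              T.powerset.filter (fun z => u ⊂ z) := by
            ext z
            simp only [Finset.mem_filter, Finset.mem_powerset]
            constructor
            · rintro ⟨hz, hc | hc⟩
              · exact ⟨(hmem z hz).2, hc⟩
              · -- z ⊂ u impossible by minimality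
                exfalso
                have := humin z hz
                have := Finset.card_lt_card hc
                omega
            · rintro ⟨hzT, huz⟩
              exact ⟨hup u hu z huz.1 hzT, Or.inl huz⟩
          rw [hfe]
          apply ihk (T.powerset.filter (fun z => u ⊂ z)).card u T _ ?_ le_rfl ?_ ?_ ?_
          · have hss := ssub_sdiff hbu huT'
            have := Finset.card_lt_card hss
            omega
          · intro z hz
            have := Finset.mem_filter.mp hz
            exact ⟨this.2, Finset.mem_powerset.mp this.1⟩
          · intro z hz z' hzz' hz'T
            have := Finset.mem_filter.mp hz
            exact Finset.mem_filter.mpr ⟨Finset.mem_powerset.mpr hz'T,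
              lt_of_lt_of_le this.2 hzz'⟩
          · exact Finset.mem_filter.mpr ⟨Finset.mem_powerset.mpr le_rfl, huT''⟩
        · rw [inclG_erase]
          apply ihm b T _ hk ?_ ?_ ?_ ?_
          · have := erase_card_lt hu
            omega
          · intro z hz
            exact hmem z (Finset.mem_of_mem_erase hz)
          · intro z hz z' hzz' hz'T
            have hzU := Finset.mem_of_mem_erase hz
            have hz'U := hup z hzU z' hzz' hz'T
            apply Finset.mem_erase.mpr ⟨?_, hz'U⟩
            intro hz'u
            have hzu : z ≠ u := (Finset.mem_erase.mp hz).1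
            have hle := humin z hzU
            exact hzu (Finset.eq_of_subset_of_card_le (hz'u ▸ hzz') hle)
          · exact Finset.mem_erase.mpr ⟨Ne.symm huT, hT⟩

/-- a downward closed family (with its minimum, strictly below a top) is contractible -/
theorem down_contr : ∀ (k m : ℕ) (m0 T : Finset V) (D : Finset (Finset V)),
    (T \ m0).card ≤ k → D.card ≤ m →
    (∀ z ∈ D, m0 ⊆ z ∧ z ⊂ T) →
    (∀ z ∈ D, ∀ z', m0 ⊆ z' → z' ⊆ z → z' ∈ D) →
    m0 ∈ D →
    Contractible (inclG D) := by
  intro k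
  induction k with
  | zero =>
    intro m m0 T D hk _ hmem _ hm0
    -- with (T\m0).card = 0 → T ⊆ m0 → m0 ⊂ T impossible
    obtain ⟨_, hm0T⟩ := hmem m0 hm0
    obtain ⟨x, hxT, hxm0⟩ := Finset.exists_of_ssubset hm0T
    have hx : x ∈ T \ m0 := Finset.mem_sdiff.mpr ⟨hxT, hxm0⟩
    have h1 : 0 < (T \ m0).card := Finset.card_pos.mpr ⟨x, hx⟩
    omega
  | succ k ihk =>
    intro m
    induction m with
    | zero =>
      intro m0 T D _ hm _ _ hm0
      have : D = ∅ := Finset.card_eq_zero.mp (by omega)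
      rw [this] at hm0; simp at hm0
    | succ m ihm =>
      intro m0 T D hk hm hmem hdown hm0
      obtain ⟨z, hz, hzmax⟩ := Finset.exists_max_image D Finset.card ⟨m0, hm0⟩
      by_cases hzm0 : z = m0
      · have : D = {m0} := by
          apply Finset.eq_singleton_iff_unique_mem.mpr
          refine ⟨hm0, fun w hw => ?_⟩
          have h1 : m0 ⊆ w := (hmem w hw).1
          have h2 : w.card ≤ m0.card := hzm0 ▸ hzmax w hw
          exact (Finset.eq_of_subset_of_card_le h1 (by omega)).symm
        exact contr_single this
      · have hm0z : m0 ⊂ z :=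
          Finset.ssubset_iff_subset_ne.mpr ⟨(hmem z hz).1, Ne.symm hzm0⟩
        apply Contractible.step _ z hz
        · rw [inclG_unitSphere hz]
          have hfe : D.filter (fun w => cmp z w) =
              T.powerset.filter (fun w => m0 ⊆ w ∧ w ⊂ z) := by
            ext w
            simp only [Finset.mem_filter, Finset.mem_powerset]
            constructor
            · rintro ⟨hw, hc | hc⟩
              · exfalso
                have := hzmax w hw
                have := Finset.card_lt_card hc
                omega
              · exact ⟨(hmem w hw).2.subset, (hmem w hw).1, hc⟩
            · rintro ⟨hwT, hm0w, hwz⟩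
              exact ⟨hdown z hz w hm0w hwz.1, Or.inr hwz⟩
          rw [hfe]
          apply ihk (T.powerset.filter (fun w => m0 ⊆ w ∧ w ⊂ z)).card m0 z _ ?_ le_rfl ?_ ?_ ?_
          · have hss : z \ m0 ⊂ T \ m0 := by
              constructor
              · intro x hx
                rcases Finset.mem_sdiff.mp hx with ⟨hxz, hxm0⟩
                exact Finset.mem_sdiff.mpr ⟨(hmem z hz).2.subset hxz, hxm0⟩
              · intro hsub
                obtain ⟨x, hxT, hxz⟩ := Finset.exists_of_ssubset (hmem z hz).2
                have hxm0 : x ∉ m0 := fun h => hxz ((hmem z hz).1 h)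
                have : x ∈ z \ m0 := hsub (Finset.mem_sdiff.mpr ⟨hxT, hxm0⟩)
                exact hxz (Finset.mem_sdiff.mp this).1
            have := Finset.card_lt_card hss
            omega
          · intro w hw
            have := Finset.mem_filter.mp hw
            exact ⟨this.2.1, this.2.2⟩
          · intro w hw w' hm0w' hw'w
            have := Finset.mem_filter.mp hw
            refine Finset.mem_filter.mpr ⟨?_, hm0w', lt_of_le_of_lt hw'w this.2.2⟩
            exact Finset.mem_powerset.mpr (le_trans hw'w (Finset.mem_powerset.mp this.1))
          · exact Finset.mem_filter.mpr
              ⟨Finset.mem_powerset.mpr ((hmem z hz).1.trans (hmem z hz).2.subset),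
                le_rfl, hm0z⟩
        · rw [inclG_erase]
          apply ihm m0 T _ hk ?_ ?_ ?_ ?_
          · have := erase_card_lt hz
            omega
          · intro w hw
            exact hmem w (Finset.mem_of_mem_erase hw)
          · intro w hw w' hm0w' hw'w
            have hwD := Finset.mem_of_mem_erase hw
            apply Finset.mem_erase.mpr ⟨?_, hdown w hwD w' hm0w' hw'w⟩
            rintro rfl
            exact (Finset.mem_erase.mp hw).1
              ((Finset.eq_of_subset_of_card_le hw'w (hzmax w hwD)).symm)
          · exact Finset.mem_erase.mpr ⟨fun h => hzm0 h.symm, hm0⟩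

end MS

namespace MS
open FGraph

variable {V : Type}

/-- removing an "upper layer" A0 from above a kept part Ac, largest first -/
theorem sweep_max : ∀ (n : ℕ) (Ac A0 : Finset (Finset V)), A0.card ≤ n →
    (∀ u ∈ A0, ∀ z ∈ Ac, ¬ z ⊆ u) →
    (∀ u ∈ A0, Contractible (inclG (Ac.filter (fun z => u ⊂ z)))) →
    Contractible (inclG Ac) →
    Contractible (inclG (Ac ∪ A0)) := by
  intro n
  induction n with
  | zero =>
    intro Ac A0 hn _ _ hc
    have : A0 = ∅ := Finset.card_eq_zero.mp (by omega)
    rwa [this, Finset.union_empty]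
  | succ n ih =>
    intro Ac A0 hn h1 h2 hc
    rcases Finset.eq_empty_or_nonempty A0 with rfl | hne
    · rwa [Finset.union_empty]
    obtain ⟨u, hu, humax⟩ := Finset.exists_max_image A0 Finset.card hne
    have huAc : u ∉ Ac := fun h => h1 u hu u h le_rfl
    apply Contractible.step _ u (Finset.mem_union_right _ hu)
    · rw [inclG_unitSphere (Finset.mem_union_right _ hu)]
      have hfe : (Ac ∪ A0).filter (fun z => cmp u z) =
          (A0.filter (fun z => z ⊂ u)) ∪ (Ac.filter (fun z => u ⊂ z)) := by
        ext z
        simp only [Finset.mem_filter, Finset.mem_union]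
        constructor
        · rintro ⟨hz | hz, hc' | hc'⟩
          · exact Or.inr ⟨hz, hc'⟩
          · exact absurd hc'.subset (h1 u hu z hz)
          · exfalso
            have := humax z hz
            have := Finset.card_lt_card hc'
            omega
          · exact Or.inl ⟨hz, hc'⟩
        · rintro (⟨hz, hc'⟩ | ⟨hz, hc'⟩)
          · exact ⟨Or.inr hz, Or.inr hc'⟩
          · exact ⟨Or.inl hz, Or.inl hc'⟩
      rw [hfe]
      apply contr_join_right ?_ (h2 u hu)
      intro a ha b hb
      have h1' := (Finset.mem_filter.mp ha).2
      have h2' := (Finset.mem_filter.mp hb).2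
      exact Or.inl (h1'.trans h2')
    · rw [inclG_erase]
      have : (Ac ∪ A0).erase u = Ac ∪ (A0.erase u) := by
        ext z
        simp only [Finset.mem_erase, Finset.mem_union]
        constructor
        · rintro ⟨hne', hz | hz⟩
          · exact Or.inl hz
          · exact Or.inr ⟨hne', hz⟩
        · rintro (hz | ⟨hne', hz⟩)
          · exact ⟨fun h => huAc (h ▸ hz), Or.inl hz⟩
          · exact ⟨hne', Or.inr hz⟩
      rw [this]
      apply ih
      · have := erase_card_lt hu
        omega
      · intro w hw z hz
        exact h1 w (Finset.mem_of_mem_erase hw) z hz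
      · intro w hw
        exact h2 w (Finset.mem_of_mem_erase hw)
      · exact hc

/-- removing a "lower layer" A0 from below a kept part Ac, smallest first -/
theorem sweep_min : ∀ (n : ℕ) (Ac A0 : Finset (Finset V)), A0.card ≤ n →
    (∀ u ∈ A0, ∀ z ∈ Ac, ¬ u ⊆ z) →
    (∀ u ∈ A0, Contractible (inclG (Ac.filter (fun z => z ⊂ u)))) →
    Contractible (inclG Ac) →
    Contractible (inclG (Ac ∪ A0)) := by
  intro n
  induction n with
  | zero =>
    intro Ac A0 hn _ _ hc
    have : A0 = ∅ := Finset.card_eq_zero.mp (by omega)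
    rwa [this, Finset.union_empty]
  | succ n ih =>
    intro Ac A0 hn h1 h2 hc
    rcases Finset.eq_empty_or_nonempty A0 with rfl | hne
    · rwa [Finset.union_empty]
    obtain ⟨u, hu, humin⟩ := Finset.exists_min_image A0 Finset.card hne
    have huAc : u ∉ Ac := fun h => h1 u hu u h le_rfl
    apply Contractible.step _ u (Finset.mem_union_right _ hu)
    · rw [inclG_unitSphere (Finset.mem_union_right _ hu)]
      have hfe : (Ac ∪ A0).filter (fun z => cmp u z) =
          (Ac.filter (fun z => z ⊂ u)) ∪ (A0.filter (fun z => u ⊂ z)) := by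
        ext z
        simp only [Finset.mem_filter, Finset.mem_union]
        constructor
        · rintro ⟨hz | hz, hc' | hc'⟩
          · exact absurd hc'.subset (h1 u hu z hz)
          · exact Or.inl ⟨hz, hc'⟩
          · exact Or.inr ⟨hz, hc'⟩
          · exfalso
            have := humin z hz
            have := Finset.card_lt_card hc'
            omega
        · rintro (⟨hz, hc'⟩ | ⟨hz, hc'⟩)
          · exact ⟨Or.inl hz, Or.inr hc'⟩
          · exact ⟨Or.inr hz, Or.inl hc'⟩
      rw [hfe]
      apply contr_join_left ?_ (h2 u hu)
      intro a ha b hb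
      have h1' := (Finset.mem_filter.mp ha).2
      have h2' := (Finset.mem_filter.mp hb).2
      exact Or.inl (h1'.trans h2')
    · rw [inclG_erase]
      have : (Ac ∪ A0).erase u = Ac ∪ (A0.erase u) := by
        ext z
        simp only [Finset.mem_erase, Finset.mem_union]
        constructor
        · rintro ⟨hne', hz | hz⟩
          · exact Or.inl hz
          · exact Or.inr ⟨hne', hz⟩
        · rintro (hz | ⟨hne', hz⟩)
          · exact ⟨fun h => huAc (h ▸ hz), Or.inl hz⟩
          · exact ⟨hne', Or.inr hz⟩
      rw [this]
      apply ih
      · have := erase_card_lt hu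
        omega
      · intro w hw z hz
        exact h1 w (Finset.mem_of_mem_erase hw) z hz
      · intro w hw
        exact h2 w (Finset.mem_of_mem_erase hw)
      · exact hc

end MS

namespace MS
open FGraph

variable {V : Type}

/-- family of sets y with b ⊆ y ⊆ M touching all blocks in L, avoiding ⊇ P -/
noncomputable def ttFam (M b : Finset V) (L : List (Finset V)) (P : Finset V) :
    Finset (Finset V) :=
  M.powerset.filter (fun y => b ⊆ y ∧ (∀ s ∈ L, (y ∩ s).Nonempty) ∧ ¬ P ⊆ y)

theorem mem_ttFam {M b P y : Finset V} {L : List (Finset V)} :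
    y ∈ ttFam M b L P ↔
      y ⊆ M ∧ b ⊆ y ∧ (∀ s ∈ L, (y ∩ s).Nonempty) ∧ ¬ P ⊆ y := by
  simp only [ttFam, Finset.mem_filter, Finset.mem_powerset]

theorem tt_contr : ∀ (L : List (Finset V)) (M b P : Finset V),
    b ⊆ M → P ⊆ M → P.Nonempty → Disjoint P b →
    (∀ s ∈ L, s ⊆ M) → (∀ s ∈ L, ¬ s ⊆ P) → List.Pairwise Disjoint L →
    Contractible (inclG (ttFam M b L P)) := by
  intro L
  induction L with
  | nil =>
    intro M b P hbM hPM hPne hPb _ _ _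
    obtain ⟨p, hp⟩ := hPne
    have hpb : p ∉ b := Finset.disjoint_left.mp hPb hp
    apply down_contr (M \ b).card (ttFam M b [] P).card b M _ le_rfl le_rfl
    · intro z hz
      rw [mem_ttFam] at hz
      refine ⟨hz.2.1, Finset.ssubset_iff_subset_ne.mpr ⟨hz.1, ?_⟩⟩
      rintro rfl
      exact hz.2.2.2 hPM
    · intro z hz z' hbz' hz'z
      rw [mem_ttFam] at hz ⊢
      exact ⟨hz'z.trans hz.1, hbz', by simp, fun hP => hz.2.2.2 (hP.trans hz'z)⟩
    · rw [mem_ttFam]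
      exact ⟨hbM, le_rfl, by simp, fun hP => hpb (hP hp)⟩
  | cons s L' ih =>
    intro M b P hbM hPM hPne hPb hsM hsP hpw
    obtain ⟨c, hcs, hcP⟩ := Finset.not_subset.mp (hsP s (by simp))
    set Ac := ttFam M (insert c b) L' P with hAcdef
    set A0 := (ttFam M b (s :: L') P).filter (fun y => c ∉ y) with hA0def
    have hcM : c ∈ M := hsM s (by simp) hcs
    have hsplit : ttFam M b (s :: L') P = Ac ∪ A0 := by
      ext y
      simp only [hAcdef, hA0def, Finset.mem_union, Finset.mem_filter, mem_ttFam]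
      constructor
      · intro hy
        by_cases hcy : c ∈ y
        · exact Or.inl ⟨hy.1, Finset.insert_subset hcy hy.2.1,
            fun t ht => hy.2.2.1 t (by simp [ht]), hy.2.2.2⟩
        · exact Or.inr ⟨hy, hcy⟩
      · rintro (⟨h1, h2, h3, h4⟩ | ⟨hy, _⟩)
        · have hcy : c ∈ y := h2 (Finset.mem_insert_self c b)
          refine ⟨h1, (Finset.insert_subset_iff.mp h2).2, ?_, h4⟩
          intro t ht
          rcases List.mem_cons.mp ht with rfl | ht'
          · exact ⟨c, Finset.mem_inter.mpr ⟨hcy, hcs⟩⟩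
          · exact h3 t ht'
        · exact hy
    rw [hsplit]
    apply sweep_max A0.card Ac A0 le_rfl
    · -- H1 : nothing of Ac is below A0
      intro u hu z hz hzu
      simp only [hA0def, Finset.mem_filter] at hu
      simp only [hAcdef, mem_ttFam] at hz
      exact hu.2 (hzu (hz.2.1 (Finset.mem_insert_self c b)))
    · -- H2 : the part of Ac above any u ∈ A0 is contractible (a full interval minus P-ups)
      intro u hu
      simp only [hA0def, Finset.mem_filter, mem_ttFam] at hu
      obtain ⟨⟨huM, hbu, htu, hPu⟩, hcu⟩ := hu
      have hfe : Ac.filter (fun z => u ⊂ z) =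
          M.powerset.filter (fun z => insert c u ⊆ z ∧ ¬ P ⊆ z) := by
        ext z
        simp only [hAcdef, Finset.mem_filter, mem_ttFam, Finset.mem_powerset]
        constructor
        · rintro ⟨⟨hzM, hcbz, _, hPz⟩, huz⟩
          exact ⟨hzM, Finset.insert_subset (hcbz (Finset.mem_insert_self c b)) huz.subset, hPz⟩
        · rintro ⟨hzM, hicz, hPz⟩
          have hcz : c ∈ z := hicz (Finset.mem_insert_self c u)
          have huz : u ⊆ z := (Finset.insert_subset_iff.mp hicz).2
          refine ⟨⟨hzM, Finset.insert_subset hcz (hbu.trans huz), ?_, hPz⟩, ?_⟩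
          · intro t ht
            obtain ⟨a, ha⟩ := htu t (List.mem_cons_of_mem s ht)
            rcases Finset.mem_inter.mp ha with ⟨hay, hat⟩
            exact ⟨a, Finset.mem_inter.mpr ⟨huz hay, hat⟩⟩
          · exact Finset.ssubset_iff_subset_ne.mpr ⟨huz, fun h => hcu (h ▸ hcz)⟩
      rw [hfe]
      apply down_contr (M \ (insert c u)).card _ (insert c u) M _ le_rfl le_rfl
      · intro z hz
        rcases Finset.mem_filter.mp hz with ⟨hzM, hicz, hPz⟩
        refine ⟨hicz, Finset.ssubset_iff_subset_ne.mpr ⟨Finset.mem_powerset.mp hzM, ?_⟩⟩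
        rintro rfl
        exact hPz hPM
      · intro z hz z' hmz' hz'z
        rcases Finset.mem_filter.mp hz with ⟨hzM, _, hPz⟩
        refine Finset.mem_filter.mpr ⟨Finset.mem_powerset.mpr
          (hz'z.trans (Finset.mem_powerset.mp hzM)), hmz', fun hP => hPz (hP.trans hz'z)⟩
      · refine Finset.mem_filter.mpr ⟨Finset.mem_powerset.mpr
          (Finset.insert_subset hcM huM), le_rfl, ?_⟩
        intro hP
        apply hPu
        intro p hp
        rcases Finset.mem_insert.mp (hP hp) with rfl | hpu
        · exact absurd hp hcP
        · exact hpu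
    · -- base : Ac is a smaller tt-family
      apply ih M (insert c b) P
      · exact Finset.insert_subset hcM hbM
      · exact hPM
      · exact hPne
      · rw [Finset.disjoint_right]
        intro a ha
        rcases Finset.mem_insert.mp ha with rfl | hab
        · exact hcP
        · exact fun haP => Finset.disjoint_left.mp hPb haP hab
      · exact fun t ht => hsM t (List.mem_cons_of_mem s ht)
      · exact fun t ht => hsP t (List.mem_cons_of_mem s ht)
      · exact (List.pairwise_cons.mp hpw).2

end MS

namespace MS
open FGraph

variable {V : Type}

noncomputable def unionL (L : List (Finset V)) : Finset V := L.foldr (· ∪ ·) ∅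

@[simp] theorem unionL_nil : unionL ([] : List (Finset V)) = ∅ := rfl
@[simp] theorem unionL_cons (s : Finset V) (L : List (Finset V)) :
    unionL (s :: L) = s ∪ unionL L := rfl

theorem mem_unionL {a : V} {L : List (Finset V)} : a ∈ unionL L ↔ ∃ s ∈ L, a ∈ s := by
  induction L with
  | nil => simp
  | cons s L ih => simp [Finset.mem_union, ih]

theorem unionL_subset {L : List (Finset V)} {M : Finset V} (h : ∀ s ∈ L, s ⊆ M) :
    unionL L ⊆ M := by
  intro a ha
  obtain ⟨s, hs, has⟩ := mem_unionL.mp ha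
  exact h s hs has

theorem subset_unionL {L : List (Finset V)} {s : Finset V} (h : s ∈ L) : s ⊆ unionL L :=
  fun a ha => mem_unionL.mpr ⟨s, h, ha⟩

theorem disjoint_unionL {s : Finset V} {L : List (Finset V)}
    (h : ∀ t ∈ L, Disjoint s t) : Disjoint s (unionL L) := by
  rw [Finset.disjoint_right]
  intro a ha has
  obtain ⟨t, ht, hat⟩ := mem_unionL.mp ha
  exact Finset.disjoint_right.mp (h t ht) hat has

theorem card_unionL {L : List (Finset V)} (h : List.Pairwise Disjoint L) :
    (unionL L).card = (L.map Finset.card).sum := by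
  induction L with
  | nil => simp
  | cons s L ih =>
    obtain ⟨h1, h2⟩ := List.pairwise_cons.mp h
    rw [unionL_cons, Finset.card_union_of_disjoint (disjoint_unionL h1)]
    simp [ih h2]

theorem sum_ge_len {L : List (Finset V)} (h : ∀ s ∈ L, s.Nonempty) :
    L.length ≤ (L.map Finset.card).sum := by
  induction L with
  | nil => simp
  | cons s L ih =>
    have h1 : 1 ≤ s.card := Finset.card_pos.mpr (h s (by simp))
    have h2 := ih (fun t ht => h t (List.mem_cons_of_mem s ht))
    simp only [List.map_cons, List.sum_cons, List.length_cons]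
    omega

theorem unionL_map_inter {L : List (Finset V)} {y : Finset V} :
    unionL (L.map (· ∩ y)) = unionL L ∩ y := by
  ext a
  simp only [mem_unionL, Finset.mem_inter, List.mem_map]
  constructor
  · rintro ⟨t, ⟨s, hs, rfl⟩, hat⟩
    rcases Finset.mem_inter.mp hat with ⟨h1, h2⟩
    exact ⟨⟨s, hs, h1⟩, h2⟩
  · rintro ⟨⟨s, hs, has⟩, hay⟩
    exact ⟨s ∩ y, ⟨s, hs, rfl⟩, Finset.mem_inter.mpr ⟨has, hay⟩⟩

theorem pairwise_map_inter {L : List (Finset V)} (h : L.Pairwise Disjoint)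
    (y : Finset V) : (L.map (· ∩ y)).Pairwise Disjoint :=
  List.Pairwise.map _
    (fun _ _ hab => hab.mono Finset.inter_subset_left Finset.inter_subset_left) h

theorem pairwise_disjoint_mem {L : List (Finset V)} (h : L.Pairwise Disjoint)
    {s t : Finset V} (hs : s ∈ L) (ht : t ∈ L) {a : V} (ha : a ∈ s) (ha' : a ∈ t) :
    s = t := by
  by_contra hne
  have h' := List.Pairwise.forall h
  exact Finset.disjoint_left.mp (h' hs ht hne) ha ha'

theorem exists_transversal : ∀ (L : List (Finset V)), (∀ s ∈ L, s.Nonempty) →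
    List.Pairwise Disjoint L →
    ∃ u : Finset V, (∀ s ∈ L, ∃ a, u ∩ s = {a}) ∧ u ⊆ unionL L := by
  intro L
  induction L with
  | nil => exact fun _ _ => ⟨∅, by simp, by simp⟩
  | cons s L ih =>
    intro hne hpw
    obtain ⟨h1, h2⟩ := List.pairwise_cons.mp hpw
    obtain ⟨u, hu1, hu2⟩ := ih (fun t ht => hne t (List.mem_cons_of_mem s ht)) h2
    obtain ⟨a, ha⟩ := hne s (by simp)
    refine ⟨insert a u, ?_, ?_⟩
    · intro t ht
      rcases List.mem_cons.mp ht with rfl | ht'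
      · refine ⟨a, ?_⟩
        ext x
        simp only [Finset.mem_inter, Finset.mem_insert, Finset.mem_singleton]
        constructor
        · rintro ⟨rfl | hxu, hxt⟩
          · rfl
          · exact absurd hxt (Finset.disjoint_right.mp (disjoint_unionL h1) (hu2 hxu))
        · rintro rfl
          exact ⟨Or.inl rfl, ha⟩
      · obtain ⟨a', ha'⟩ := hu1 t ht'
        refine ⟨a', ?_⟩
        ext x
        simp only [Finset.mem_inter, Finset.mem_insert, Finset.mem_singleton]
        constructor
        · rintro ⟨rfl | hxu, hxt⟩
          · exact absurd hxt (Finset.disjoint_left.mp (h1 t ht') ha)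
          · have : x ∈ u ∩ t := Finset.mem_inter.mpr ⟨hxu, hxt⟩
            rw [ha'] at this
            exact Finset.mem_singleton.mp this
        · intro hx
          have hmem : a' ∈ u ∩ t := ha' ▸ Finset.mem_singleton_self a'
          rcases Finset.mem_inter.mp hmem with ⟨h3, h4⟩
          rw [hx]
          exact ⟨Or.inr h3, h4⟩
    · intro x hx
      rcases Finset.mem_insert.mp hx with rfl | hxu
      · exact Finset.mem_union_left _ ha
      · exact Finset.mem_union_right _ (hu2 hxu)

/-- family of sets y with b ⊆ y ⊆ M, y ≠ M, touching all blocks in L -/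
noncomputable def fFam (M b : Finset V) (L : List (Finset V)) : Finset (Finset V) :=
  M.powerset.filter (fun y => b ⊆ y ∧ (∀ s ∈ L, (y ∩ s).Nonempty) ∧ y ≠ M)

theorem mem_fFam {M b y : Finset V} {L : List (Finset V)} :
    y ∈ fFam M b L ↔ y ⊆ M ∧ b ⊆ y ∧ (∀ s ∈ L, (y ∩ s).Nonempty) ∧ y ≠ M := by
  simp only [fFam, Finset.mem_filter, Finset.mem_powerset]

/-- remove a top layer A0 above Ac, all of whose down-sets are contractible -/
theorem sweep_top : ∀ (n : ℕ) (Ac A0 : Finset (Finset V)), A0.card ≤ n →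
    (∀ u ∈ A0, ∀ z ∈ Ac, ¬ u ⊆ z) →
    (∀ u ∈ A0, Contractible (inclG ((Ac ∪ A0).filter (fun z => z ⊂ u)))) →
    Contractible (inclG Ac) →
    Contractible (inclG (Ac ∪ A0)) := by
  intro n
  induction n with
  | zero =>
    intro Ac A0 hn _ _ hc
    have : A0 = ∅ := Finset.card_eq_zero.mp (by omega)
    rwa [this, Finset.union_empty]
  | succ n ih =>
    intro Ac A0 hn h1 h2 hc
    rcases Finset.eq_empty_or_nonempty A0 with rfl | hne
    · rwa [Finset.union_empty]
    obtain ⟨u, hu, humax⟩ := Finset.exists_max_image A0 Finset.card hne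
    have huAc : u ∉ Ac := fun h => h1 u hu u h le_rfl
    apply Contractible.step _ u (Finset.mem_union_right _ hu)
    · rw [inclG_unitSphere (Finset.mem_union_right _ hu)]
      have hfe : (Ac ∪ A0).filter (fun z => cmp u z) =
          (Ac ∪ A0).filter (fun z => z ⊂ u) := by
        apply Finset.filter_congr
        intro z hz
        constructor
        · rintro (hc' | hc')
          · exfalso
            rcases Finset.mem_union.mp hz with hzA | hzA
            · exact h1 u hu z hzA hc'.subset
            · have := humax z hzA
              have := Finset.card_lt_card hc'
              omega
          · exact hc'
        · exact fun h => Or.inr h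
      rw [hfe]
      exact h2 u hu
    · rw [inclG_erase]
      have hun : (Ac ∪ A0).erase u = Ac ∪ (A0.erase u) := by
        ext z
        simp only [Finset.mem_erase, Finset.mem_union]
        constructor
        · rintro ⟨hne', hz | hz⟩
          · exact Or.inl hz
          · exact Or.inr ⟨hne', hz⟩
        · rintro (hz | ⟨hne', hz⟩)
          · exact ⟨fun h => huAc (h ▸ hz), Or.inl hz⟩
          · exact ⟨hne', Or.inr hz⟩
      rw [hun]
      apply ih
      · have := erase_card_lt hu
        omega
      · intro w hw z hz
        exact h1 w (Finset.mem_of_mem_erase hw) z hz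
      · intro w hw
        have hwA0 := Finset.mem_of_mem_erase hw
        have hset : (Ac ∪ A0.erase u).filter (fun z => z ⊂ w) =
            (Ac ∪ A0).filter (fun z => z ⊂ w) := by
          ext z
          simp only [Finset.mem_filter, Finset.mem_union, Finset.mem_erase]
          constructor
          · rintro ⟨hz | ⟨_, hz⟩, hzw⟩
            · exact ⟨Or.inl hz, hzw⟩
            · exact ⟨Or.inr hz, hzw⟩
          · rintro ⟨hz | hz, hzw⟩
            · exact ⟨Or.inl hz, hzw⟩
            · refine ⟨Or.inr ⟨?_, hz⟩, hzw⟩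
              rintro rfl
              have := humax w hwA0
              have := Finset.card_lt_card hzw
              omega
        rw [hset]
        exact h2 w hwA0
      · exact hc

end MS

namespace MS
open FGraph

variable {V : Type}

theorem f_punct : ∀ (n : ℕ) (M b u₀ : Finset V) (L : List (Finset V)),
    (M \ b).card ≤ n →
    b ⊆ M → M = b ∪ unionL L → Disjoint b (unionL L) →
    (∀ s ∈ L, s.Nonempty) → List.Pairwise Disjoint L →
    (∀ s ∈ L, ∃ a, u₀ ∩ s = {a}) → u₀ ⊆ unionL L →
    b ∪ u₀ ≠ M →
    Contractible (inclG ((fFam M b L).erase (b ∪ u₀))) := by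
  intro n
  induction n with
  | zero =>
    intro M b u₀ L hn hbM hM hdj hLne hpw htr hu₀ hv₀M
    exfalso
    apply hv₀M
    apply Finset.Subset.antisymm
    · exact Finset.union_subset hbM ((hu₀.trans (hM ▸ Finset.subset_union_right)))
    · intro x hxM
      have : x ∈ b := by
        by_contra hxb
        have : x ∈ M \ b := Finset.mem_sdiff.mpr ⟨hxM, hxb⟩
        have h1 : 0 < (M \ b).card := Finset.card_pos.mpr ⟨x, this⟩
        omega
      exact Finset.mem_union_left _ this
  | succ n ih =>
    intro M b u₀ L hn hbM hM hdj hLne hpw htr hu₀ hv₀M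
    set v₀ := b ∪ u₀ with hv₀def
    have huLM : unionL L ⊆ M := hM ▸ Finset.subset_union_right
    have hu₀M : u₀ ⊆ M := hu₀.trans huLM
    have hv₀sub : v₀ ⊆ M := Finset.union_subset hbM hu₀M
    set Ac := (fFam M b L).filter (fun y => ¬ u₀ ⊆ y) with hAcdef
    set A0 := (fFam M b L).filter (fun y => u₀ ⊆ y ∧ y ≠ v₀) with hA0def
    have hsplit : (fFam M b L).erase v₀ = Ac ∪ A0 := by
      ext y
      simp only [hAcdef, hA0def, Finset.mem_erase, Finset.mem_union, Finset.mem_filter]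
      constructor
      · rintro ⟨hne, hy⟩
        by_cases hc : u₀ ⊆ y
        · exact Or.inr ⟨hy, hc, hne⟩
        · exact Or.inl ⟨hy, hc⟩
      · rintro (⟨hy, hc⟩ | ⟨hy, _, hne⟩)
        · refine ⟨?_, hy⟩
          rintro rfl
          exact hc Finset.subset_union_right
        · exact ⟨hne, hy⟩
    rw [hsplit]
    apply sweep_top A0.card Ac A0 le_rfl
    · -- H1
      intro u hu z hz huz
      simp only [hA0def, Finset.mem_filter] at hu
      simp only [hAcdef, Finset.mem_filter] at hz
      exact hz.2 (hu.2.1.trans huz)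
    · -- H2 : down-sets of A0 elements are punctured smaller F-families
      intro u hu
      simp only [hA0def, Finset.mem_filter, mem_fFam] at hu
      obtain ⟨⟨huM, hbu, htu, huneM⟩, hu₀u, hunev₀⟩ := hu
      have hfe : (Ac ∪ A0).filter (fun z => z ⊂ u) =
          (fFam u b (L.map (· ∩ u))).erase v₀ := by
        rw [← hsplit]
        ext z
        simp only [Finset.mem_filter, Finset.mem_erase, mem_fFam]
        constructor
        · rintro ⟨⟨hzv₀, hzM, hbz, htz, hzneM⟩, hzu⟩
          refine ⟨hzv₀, hzu.subset, hbz, ?_, hzu.ne⟩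
          intro t ht
          obtain ⟨s, hs, rfl⟩ := List.mem_map.mp ht
          obtain ⟨a, ha⟩ := htz s hs
          rcases Finset.mem_inter.mp ha with ⟨haz, has⟩
          exact ⟨a, Finset.mem_inter.mpr ⟨haz, Finset.mem_inter.mpr ⟨has, hzu.subset haz⟩⟩⟩
        · rintro ⟨hzv₀, hzu, hbz, htz, hzneu⟩
          have hzu' : z ⊂ u := Finset.ssubset_iff_subset_ne.mpr ⟨hzu, hzneu⟩
          refine ⟨⟨hzv₀, hzu.trans huM, hbz, ?_, ?_⟩, hzu'⟩
          · intro s hs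
            obtain ⟨a, ha⟩ := htz (s ∩ u) (List.mem_map_of_mem hs)
            rcases Finset.mem_inter.mp ha with ⟨haz, has⟩
            exact ⟨a, Finset.mem_inter.mpr ⟨haz, (Finset.mem_inter.mp has).1⟩⟩
          · rintro rfl
            exact huneM (Finset.Subset.antisymm huM hzu)
      rw [hfe]
      apply ih u b u₀ (L.map (· ∩ u))
      · -- measure
        have hss : u \ b ⊂ M \ b := by
          constructor
          · intro x hx
            rcases Finset.mem_sdiff.mp hx with ⟨hxu, hxb⟩
            exact Finset.mem_sdiff.mpr ⟨huM hxu, hxb⟩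
          · intro hsub
            obtain ⟨x, hxM, hxu⟩ := Finset.exists_of_ssubset
              (Finset.ssubset_iff_subset_ne.mpr ⟨huM, huneM⟩)
            have hxb : x ∉ b := fun h => hxu (hbu h)
            have : x ∈ u \ b := hsub (Finset.mem_sdiff.mpr ⟨hxM, hxb⟩)
            exact hxu (Finset.mem_sdiff.mp this).1
        have := Finset.card_lt_card hss
        omega
      · exact hbu
      · -- u = b ∪ unionL (map)
        rw [unionL_map_inter]
        apply Finset.Subset.antisymm
        · intro x hxu
          rcases Finset.mem_union.mp (hM ▸ huM hxu) with hxb | hxL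
          · exact Finset.mem_union_left _ hxb
          · exact Finset.mem_union_right _ (Finset.mem_inter.mpr ⟨hxL, hxu⟩)
        · apply Finset.union_subset hbu
          intro x hx
          exact (Finset.mem_inter.mp hx).2
      · rw [unionL_map_inter]
        exact hdj.mono le_rfl Finset.inter_subset_left
      · intro t ht
        obtain ⟨s, hs, rfl⟩ := List.mem_map.mp ht
        obtain ⟨a, ha⟩ := htu s hs
        rcases Finset.mem_inter.mp ha with ⟨hau, has⟩
        exact ⟨a, Finset.mem_inter.mpr ⟨has, hau⟩⟩
      · exact pairwise_map_inter hpw u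
      · -- transversal restricted
        intro t ht
        obtain ⟨s, hs, rfl⟩ := List.mem_map.mp ht
        obtain ⟨a, ha⟩ := htr s hs
        have hau₀ : a ∈ u₀ := (Finset.mem_inter.mp (ha ▸ Finset.mem_singleton_self a)).1
        refine ⟨a, ?_⟩
        rw [← Finset.inter_assoc, ha]
        exact Finset.singleton_inter_of_mem (hu₀u hau₀)
      · -- u₀ ⊆ unionL (map)
        rw [unionL_map_inter]
        exact fun x hx => Finset.mem_inter.mpr ⟨hu₀ hx, hu₀u hx⟩
      · exact fun h => hunev₀ h.symm
    · -- base : Ac is a tt-family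
      set u₀s := u₀.filter (fun a => ∃ s ∈ L, a ∈ s ∧ s.card ≤ 1) with hu₀sdef
      set P' := u₀ \ u₀s with hP'def
      set b' := b ∪ u₀s with hb'def
      set L' := L.filter (fun s => decide (2 ≤ s.card)) with hL'def
      have hmemL' : ∀ s, s ∈ L' ↔ s ∈ L ∧ 2 ≤ s.card := by
        intro s
        simp [hL'def, List.mem_filter]
      have hu₀split : ∀ a ∈ u₀, a ∈ u₀s ∨ a ∈ P' := by
        intro a ha
        by_cases h : a ∈ u₀s
        · exact Or.inl h
        · exact Or.inr (Finset.mem_sdiff.mpr ⟨ha, h⟩)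
      have htrmem : ∀ s ∈ L, ∀ a, u₀ ∩ s = {a} → a ∈ u₀ ∧ a ∈ s := by
        intro s hs a ha
        have := ha ▸ Finset.mem_singleton_self a
        exact Finset.mem_inter.mp this
      have hAc : Ac = ttFam M b' L' P' := by
        ext y
        simp only [hAcdef, Finset.mem_filter, mem_fFam, mem_ttFam]
        constructor
        · rintro ⟨⟨hyM, hby, hty, hyneM⟩, hnu₀⟩
          have hu₀sy : u₀s ⊆ y := by
            intro a ha
            rw [hu₀sdef, Finset.mem_filter] at ha
            obtain ⟨hau₀, s, hs, has, hcard⟩ := ha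
            obtain ⟨w, hw⟩ := hty s hs
            rcases Finset.mem_inter.mp hw with ⟨hwy, hws⟩
            have : w = a := by
              have h1 : ({w} : Finset V) ⊆ s := Finset.singleton_subset_iff.mpr hws
              have h2 : ({a} : Finset V) ⊆ s := Finset.singleton_subset_iff.mpr has
              by_contra hne
              have : ({w, a} : Finset V) ⊆ s := by
                intro x hx
                rcases Finset.mem_insert.mp hx with rfl | hx
                · exact hws
                · exact (Finset.mem_singleton.mp hx) ▸ has
              have hc2 : ({w, a} : Finset V).card = 2 := Finset.card_pair hne
              have := Finset.card_le_card this
              omega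
            exact this ▸ hwy
          refine ⟨hyM, Finset.union_subset hby hu₀sy, ?_, ?_⟩
          · intro s hs
            rcases (hmemL' s).mp hs with ⟨hsL, _⟩
            exact hty s hsL
          · intro hP'y
            apply hnu₀
            intro a ha
            rcases hu₀split a ha with h | h
            · exact hu₀sy h
            · exact hP'y h
        · rintro ⟨hyM, hb'y, hty', hnP'⟩
          have hby : b ⊆ y := (Finset.subset_union_left).trans hb'y
          have hu₀sy : u₀s ⊆ y := (Finset.subset_union_right).trans hb'y
          refine ⟨⟨hyM, hby, ?_, ?_⟩, ?_⟩
          · intro s hs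
            by_cases hbig : 2 ≤ s.card
            · exact hty' s ((hmemL' s).mpr ⟨hs, hbig⟩)
            · obtain ⟨a, ha⟩ := htr s hs
              obtain ⟨hau₀, has⟩ := htrmem s hs a ha
              have hau₀s : a ∈ u₀s := by
                rw [hu₀sdef, Finset.mem_filter]
                exact ⟨hau₀, s, hs, has, by omega⟩
              exact ⟨a, Finset.mem_inter.mpr ⟨hu₀sy hau₀s, has⟩⟩
          · rintro rfl
            exact hnP' ((Finset.sdiff_subset).trans hu₀M)
          · intro hu₀y
            exact hnP' (fun a ha => hu₀y (Finset.mem_sdiff.mp ha).1)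
      rw [hAc]
      apply tt_contr
      · exact Finset.union_subset hbM ((Finset.filter_subset _ _).trans hu₀M)
      · exact (Finset.sdiff_subset).trans hu₀M
      · -- P' nonempty
        by_contra hP'
        rw [Finset.not_nonempty_iff_eq_empty] at hP'
        have hall : ∀ s ∈ L, s.card ≤ 1 := by
          intro s hs
          by_contra hbig
          obtain ⟨a, ha⟩ := htr s hs
          obtain ⟨hau₀, has⟩ := htrmem s hs a ha
          have : a ∈ u₀s := by
            rcases hu₀split a hau₀ with h | h
            · exact h
            · rw [hP'] at h; simp at h
          rw [hu₀sdef, Finset.mem_filter] at this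
          obtain ⟨_, t, htL, hat, hcard⟩ := this
          have heq := pairwise_disjoint_mem hpw hs htL has hat
          rw [← heq] at hcard
          omega
        apply hv₀M
        apply Finset.Subset.antisymm hv₀sub
        intro x hxM
        rcases Finset.mem_union.mp (hM ▸ hxM) with hxb | hxL
        · exact Finset.mem_union_left _ hxb
        · obtain ⟨s, hs, hxs⟩ := mem_unionL.mp hxL
          obtain ⟨a, ha⟩ := htr s hs
          obtain ⟨hau₀, has⟩ := htrmem s hs a ha
          have : x = a := by
            have h1 := hall s hs
            by_contra hne
            have : ({x, a} : Finset V) ⊆ s := by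
              intro w hw
              rcases Finset.mem_insert.mp hw with rfl | hw
              · exact hxs
              · exact (Finset.mem_singleton.mp hw) ▸ has
            have hc2 : ({x, a} : Finset V).card = 2 := Finset.card_pair hne
            have := Finset.card_le_card this
            omega
          exact Finset.mem_union_right _ (this ▸ hau₀)
      · -- Disjoint P' b'
        rw [Finset.disjoint_left]
        intro a haP' hab'
        rcases Finset.mem_union.mp hab' with hab | hau₀s
        · have hau₀ : a ∈ u₀ := (Finset.mem_sdiff.mp haP').1
          exact Finset.disjoint_left.mp hdj hab (hu₀ hau₀)
        · exact (Finset.mem_sdiff.mp haP').2 hau₀s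
      · intro s hs
        exact (subset_unionL ((hmemL' s).mp hs).1).trans huLM
      · -- no L' block inside P'
        intro s hs hsP'
        rcases (hmemL' s).mp hs with ⟨hsL, hbig⟩
        obtain ⟨a, ha⟩ := htr s hsL
        obtain ⟨hau₀, has⟩ := htrmem s hsL a ha
        obtain ⟨x, hxs, hxa⟩ := Finset.exists_mem_ne (s := s) (by omega) a
        have hxu₀ : x ∈ u₀ := (Finset.mem_sdiff.mp (hsP' hxs)).1
        have : x ∈ u₀ ∩ s := Finset.mem_inter.mpr ⟨hxu₀, hxs⟩
        rw [ha] at this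
        exact hxa (Finset.mem_singleton.mp this)
      · exact List.Pairwise.sublist (List.filter_sublist (l := L)) hpw

end MS

namespace MS
open FGraph

variable {V : Type}

theorem sdiff_card_lt_of_ssub {b y M : Finset V} (hby : b ⊆ y) (hyM : y ⊆ M)
    (hne : y ≠ M) : (y \ b).card < (M \ b).card := by
  apply Finset.card_lt_card
  constructor
  · intro x hx
    rcases Finset.mem_sdiff.mp hx with ⟨hxy, hxb⟩
    exact Finset.mem_sdiff.mpr ⟨hyM hxy, hxb⟩
  · intro hsub
    obtain ⟨x, hxM, hxy⟩ := Finset.exists_of_ssubset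
      (Finset.ssubset_iff_subset_ne.mpr ⟨hyM, hne⟩)
    have hxb : x ∉ b := fun h => hxy (hby h)
    have : x ∈ y \ b := hsub (Finset.mem_sdiff.mpr ⟨hxM, hxb⟩)
    exact hxy (Finset.mem_sdiff.mp this).1

theorem sum_eq_len {L : List (Finset V)} (h : ∀ s ∈ L, s.card = 1) :
    (L.map Finset.card).sum = L.length := by
  induction L with
  | nil => simp
  | cons s L ih =>
    simp only [List.map_cons, List.sum_cons, List.length_cons]
    rw [h s (by simp), ih (fun t ht => h t (List.mem_cons_of_mem s ht))]
    omega

theorem sum_ge_len_succ {L : List (Finset V)} (h1 : ∀ s ∈ L, s.Nonempty)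
    {s₀ : Finset V} (hs₀ : s₀ ∈ L) (h2 : 2 ≤ s₀.card) :
    L.length + 1 ≤ (L.map Finset.card).sum := by
  induction L with
  | nil => simp at hs₀
  | cons s L ih =>
    simp only [List.map_cons, List.sum_cons, List.length_cons]
    rcases List.mem_cons.mp hs₀ with rfl | hs₀'
    · have := sum_ge_len (fun t ht => h1 t (List.mem_cons_of_mem s₀ ht))
      omega
    · have := ih (fun t ht => h1 t (List.mem_cons_of_mem s ht)) hs₀'
      have h3 : 1 ≤ s.card := Finset.card_pos.mpr (h1 s (by simp))
      omega

theorem f_sphere : ∀ (n : ℕ) (M b : Finset V) (L : List (Finset V)),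
    (M \ b).card ≤ n →
    b ⊆ M → M = b ∪ unionL L → Disjoint b (unionL L) →
    (∀ s ∈ L, s.Nonempty) → List.Pairwise Disjoint L → L ≠ [] →
    IsSphere ((M.card : ℤ) - b.card - L.length - 1) (inclG (fFam M b L)) := by
  intro n
  induction n with
  | zero =>
    intro M b L hn hbM hM hdj hLne hpw hL0
    exfalso
    obtain ⟨s, hs⟩ := List.exists_mem_of_ne_nil L hL0
    obtain ⟨a, ha⟩ := hLne s hs
    have haU : a ∈ unionL L := subset_unionL hs ha
    have : a ∈ M \ b := Finset.mem_sdiff.mpr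
      ⟨hM ▸ Finset.mem_union_right _ haU, Finset.disjoint_right.mp hdj haU⟩
    have := Finset.card_pos.mpr ⟨a, this⟩
    omega
  | succ n ih =>
    intro M b L hn hbM hM hdj hLne hpw hL0
    have huLM : unionL L ⊆ M := hM ▸ Finset.subset_union_right
    have hcM : M.card = b.card + (unionL L).card := by
      rw [hM, Finset.card_union_of_disjoint hdj]
    by_cases hall : ∀ s ∈ L, s.card = 1
    · -- empty case, dimension -1
      have hdim : (M.card : ℤ) - b.card - L.length - 1 = -1 := by
        rw [hcM, card_unionL hpw, sum_eq_len hall]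
        push_cast
        ring
      rw [hdim]
      apply empty_sphere
      rw [Finset.eq_empty_iff_forall_notMem]
      intro y hy
      rw [mem_fFam] at hy
      obtain ⟨hyM, hby, hty, hyneM⟩ := hy
      apply hyneM
      apply Finset.Subset.antisymm hyM
      rw [hM]
      apply Finset.union_subset_iff.mpr ⟨hby, ?_⟩
      intro x hx
      obtain ⟨s, hs, hxs⟩ := mem_unionL.mp hx
      obtain ⟨w, hw⟩ := hty s hs
      rcases Finset.mem_inter.mp hw with ⟨hwy, hws⟩
      have : w = x := Finset.card_le_one.mp (le_of_eq (hall s hs)) w hws x hxs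
      exact this ▸ hwy
    · -- main case
      push_neg at hall
      obtain ⟨s₀, hs₀L, hs₀c⟩ := hall
      have hs₀2 : 2 ≤ s₀.card := by
        have := Finset.card_pos.mpr (hLne s₀ hs₀L)
        omega
      have hdim0 : 0 ≤ (M.card : ℤ) - b.card - L.length - 1 := by
        have h1 := sum_ge_len_succ hLne hs₀L hs₀2
        have h2 := card_unionL hpw
        omega
      -- the puncture vertex
      obtain ⟨u₀, htr, hu₀U⟩ := exists_transversal L hLne hpw
      have hv₀mem : b ∪ u₀ ∈ fFam M b L := by
        rw [mem_fFam]
        refine ⟨Finset.union_subset hbM (hu₀U.trans huLM), Finset.subset_union_left, ?_, ?_⟩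
        · intro s hs
          obtain ⟨a, ha⟩ := htr s hs
          have := ha ▸ Finset.mem_singleton_self a
          rcases Finset.mem_inter.mp this with ⟨hau₀, has⟩
          exact ⟨a, Finset.mem_inter.mpr ⟨Finset.mem_union_right _ hau₀, has⟩⟩
        · obtain ⟨a₀, ha₀⟩ := htr s₀ hs₀L
          have := ha₀ ▸ Finset.mem_singleton_self a₀
          rcases Finset.mem_inter.mp this with ⟨ha₀u₀, ha₀s₀⟩
          obtain ⟨x, hxs₀, hxa₀⟩ := Finset.exists_mem_ne (s := s₀) (by omega) a₀
          have hxU : x ∈ unionL L := subset_unionL hs₀L hxs₀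
          intro hEq
          have hxM : x ∈ M := hM ▸ Finset.mem_union_right _ hxU
          rw [← hEq] at hxM
          rcases Finset.mem_union.mp hxM with hxb | hxu₀
          · exact Finset.disjoint_right.mp hdj hxU hxb
          · have : x ∈ u₀ ∩ s₀ := Finset.mem_inter.mpr ⟨hxu₀, hxs₀⟩
            rw [ha₀] at this
            exact hxa₀ (Finset.mem_singleton.mp this)
      apply IsSphere.punctured _ _ ?_ (b ∪ u₀) hv₀mem ?_
      · -- manifold
        apply IsManifold.intro _ hdim0
        intro y hy
        have hyA : y ∈ fFam M b L := hy
        have hy' := hyA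
        rw [mem_fFam] at hy'
        obtain ⟨hyM, hby, hty, hyneM⟩ := hy'
        rw [inclG_unitSphere hyA]
        have hbsy : b ⊂ y := by
          obtain ⟨s, hs⟩ := List.exists_mem_of_ne_nil L hL0
          obtain ⟨a, ha⟩ := hty s hs
          rcases Finset.mem_inter.mp ha with ⟨hay, has⟩
          refine Finset.ssubset_iff_subset_ne.mpr ⟨hby, ?_⟩
          rintro rfl
          exact Finset.disjoint_right.mp hdj (subset_unionL hs has) hay
        have hfe : (fFam M b L).filter (fun z => cmp y z) =
            (fFam y b (L.map (· ∩ y))) ∪ (fFam M y [M \ y]) := by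
          ext z
          simp only [Finset.mem_filter, Finset.mem_union, mem_fFam]
          constructor
          · rintro ⟨⟨hzM, hbz, htz, hzneM⟩, hyz | hzy⟩
            · -- y ⊂ z : upper
              refine Or.inr ⟨hzM, hyz.subset, ?_, hzneM⟩
              intro t ht
              rw [List.mem_singleton] at ht
              subst ht
              obtain ⟨x, hxz, hxy⟩ := Finset.exists_of_ssubset hyz
              exact ⟨x, Finset.mem_inter.mpr ⟨hxz, Finset.mem_sdiff.mpr ⟨hzM hxz, hxy⟩⟩⟩
            · -- z ⊂ y : lower
              refine Or.inl ⟨hzy.subset, hbz, ?_, hzy.ne⟩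
              intro t ht
              obtain ⟨s, hs, rfl⟩ := List.mem_map.mp ht
              obtain ⟨a, ha⟩ := htz s hs
              rcases Finset.mem_inter.mp ha with ⟨haz, has⟩
              exact ⟨a, Finset.mem_inter.mpr ⟨haz,
                Finset.mem_inter.mpr ⟨has, hzy.subset haz⟩⟩⟩
          · rintro (⟨hzy, hbz, htz, hzney⟩ | ⟨hzM, hyz, htz, hzneM⟩)
            · -- lower
              refine ⟨⟨hzy.trans hyM, hbz, ?_, ?_⟩, Or.inr (Finset.ssubset_iff_subset_ne.mpr ⟨hzy, hzney⟩)⟩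
              · intro s hs
                obtain ⟨a, ha⟩ := htz (s ∩ y) (List.mem_map_of_mem hs)
                rcases Finset.mem_inter.mp ha with ⟨haz, has⟩
                exact ⟨a, Finset.mem_inter.mpr ⟨haz, (Finset.mem_inter.mp has).1⟩⟩
              · rintro rfl
                exact hyneM (Finset.Subset.antisymm hyM hzy)
            · -- upper
              obtain ⟨x, hx⟩ := htz (M \ y) (by simp)
              rcases Finset.mem_inter.mp hx with ⟨hxz, hxMy⟩
              have hxy : x ∉ y := (Finset.mem_sdiff.mp hxMy).2
              refine ⟨⟨hzM, hby.trans hyz, ?_, hzneM⟩,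
                Or.inl (Finset.ssubset_iff_subset_ne.mpr ⟨hyz, ?_⟩)⟩
              · intro s hs
                obtain ⟨a, ha⟩ := hty s hs
                rcases Finset.mem_inter.mp ha with ⟨hay, has⟩
                exact ⟨a, Finset.mem_inter.mpr ⟨hyz hay, has⟩⟩
              · rintro rfl
                exact hxy hxz
        rw [hfe]
        have hlow : IsSphere ((y.card : ℤ) - b.card - L.length - 1)
            (inclG (fFam y b (L.map (· ∩ y)))) := by
          have hrec := ih y b (L.map (· ∩ y)) ?_ hby ?_ ?_ ?_ ?_ ?_
          · rwa [List.length_map] at hrec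
          · have := sdiff_card_lt_of_ssub hby hyM hyneM
            omega
          · rw [unionL_map_inter]
            apply Finset.Subset.antisymm
            · intro x hxy
              rcases Finset.mem_union.mp (hM ▸ hyM hxy) with hxb | hxL
              · exact Finset.mem_union_left _ hxb
              · exact Finset.mem_union_right _ (Finset.mem_inter.mpr ⟨hxL, hxy⟩)
            · exact Finset.union_subset hby (fun x hx => (Finset.mem_inter.mp hx).2)
          · rw [unionL_map_inter]
            exact hdj.mono le_rfl Finset.inter_subset_left
          · intro t ht
            obtain ⟨s, hs, rfl⟩ := List.mem_map.mp ht
            obtain ⟨a, ha⟩ := hty s hs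
            rcases Finset.mem_inter.mp ha with ⟨hay, has⟩
            exact ⟨a, Finset.mem_inter.mpr ⟨has, hay⟩⟩
          · exact pairwise_map_inter hpw y
          · simp [hL0]
        have hup : IsSphere ((M.card : ℤ) - y.card - 1 - 1)
            (inclG (fFam M y [M \ y])) := by
          have hrec := ih M y [M \ y] ?_ hyM ?_ ?_ ?_ ?_ ?_
          · simpa using hrec
          · have hss := ssub_sdiff hbsy hyM
            have := Finset.card_lt_card hss
            omega
          · simp only [unionL_cons, unionL_nil, Finset.union_empty]
            exact (Finset.union_sdiff_of_subset hyM).symm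
          · simp only [unionL_cons, unionL_nil, Finset.union_empty]
            exact Finset.disjoint_sdiff
          · intro t ht
            rw [List.mem_singleton] at ht
            subst ht
            rw [Finset.sdiff_nonempty]
            exact fun h => hyneM (Finset.Subset.antisymm hyM h)
          · simp
          · simp
        have hcross : Cross (fFam y b (L.map (· ∩ y))) (fFam M y [M \ y]) := by
          intro a ha c hc
          rw [mem_fFam] at ha hc
          apply Or.inl
          have h1 : a ⊂ y := Finset.ssubset_iff_subset_ne.mpr ⟨ha.1, ha.2.2.2⟩
          exact h1.trans_subset hc.2.1
        have := sphere_join hcross hlow hup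
        have harith : ((y.card : ℤ) - b.card - L.length - 1) +
            ((M.card : ℤ) - y.card - 1 - 1) + 1 =
            (M.card : ℤ) - b.card - L.length - 1 - 1 := by ring
        rwa [harith] at this
      · -- punctured
        rw [inclG_erase]
        apply f_punct (M \ b).card M b u₀ L le_rfl hbM hM hdj hLne hpw htr hu₀U
        rw [mem_fFam] at hv₀mem
        exact hv₀mem.2.2.2

end MS

namespace MS
open FGraph

variable {V : Type}

theorem induce_congr {G : FGraph V} {P Q : V → Prop} (h : ∀ a, P a ↔ Q a) :
    G.induce P = G.induce Q := by
  apply fext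
  · ext a
    show a ∈ Finset.filter _ _ ↔ a ∈ Finset.filter _ _
    simp only [Finset.mem_filter]
    rw [h a]
  · intro a b
    show G.Adj a b ∧ P a ∧ P b ↔ G.Adj a b ∧ Q a ∧ Q b
    rw [h a, h b]

theorem sub_simplex {L : FGraph V} {w w' : Finset V} (h : L.IsSimplex w)
    (hsub : w' ⊆ w) (hne : w'.Nonempty) : L.IsSimplex w' :=
  ⟨hne, fun a ha => h.2.1 (hsub ha), fun a ha b hb hab => h.2.2 a (hsub ha) b (hsub hb) hab⟩

theorem unitSphere_verts (L : FGraph V) (u : V) :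
    (L.unitSphere u).verts = L.verts.filter (fun a => L.Adj u a) := rfl

theorem mem_unitSphere_verts {L : FGraph V} {u a : V} :
    a ∈ (L.unitSphere u).verts ↔ a ∈ L.verts ∧ L.Adj u a := by
  rw [unitSphere_verts, Finset.mem_filter]

theorem unitSphere_adj {L : FGraph V} {u a b : V} :
    (L.unitSphere u).Adj a b ↔ L.Adj a b ∧ L.Adj u a ∧ L.Adj u b := Iff.rfl

theorem unitSphere_simplex_iff {L : FGraph V} {u : V} {w : Finset V} :
    (L.unitSphere u).IsSimplex w ↔ L.IsSimplex w ∧ ∀ a ∈ w, L.Adj u a := by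
  constructor
  · rintro ⟨hne, hsub, hadj⟩
    have hAdj : ∀ a ∈ w, L.Adj u a := by
      intro a ha
      exact (Finset.mem_filter.mp (hsub ha)).2
    refine ⟨⟨hne, ?_, ?_⟩, hAdj⟩
    · intro a ha
      exact (Finset.mem_filter.mp (hsub ha)).1
    · intro a ha b hb hab
      exact (hadj a ha b hb hab).1
  · rintro ⟨⟨hne, hsub, hadj⟩, hAdj⟩
    refine ⟨hne, ?_, ?_⟩
    · intro a ha
      exact Finset.mem_filter.mpr ⟨hsub ha, hAdj a ha⟩
    · intro a ha b hb hab
      exact ⟨hadj a ha b hb hab, hAdj a ha, hAdj b hb⟩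

theorem erase_adj {L : FGraph V} {u a b : V} :
    (L.erase u).Adj a b ↔ L.Adj a b ∧ a ≠ u ∧ b ≠ u := Iff.rfl

theorem mem_erase_verts {L : FGraph V} {u a : V} :
    a ∈ (L.erase u).verts ↔ a ∈ L.verts ∧ a ≠ u := by
  simp only [FGraph.erase, FGraph.induce, Finset.mem_filter]

theorem erase_simplex_iff {L : FGraph V} {u : V} {w : Finset V} :
    (L.erase u).IsSimplex w ↔ L.IsSimplex w ∧ u ∉ w := by
  constructor
  · rintro ⟨hne, hsub, hadj⟩
    refine ⟨⟨hne, fun a ha => (mem_erase_verts.mp (hsub ha)).1,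
      fun a ha b hb hab => (hadj a ha b hb hab).1⟩, fun hu => ?_⟩
    exact (mem_erase_verts.mp (hsub hu)).2 rfl
  · rintro ⟨⟨hne, hsub, hadj⟩, hu⟩
    refine ⟨hne, fun a ha => mem_erase_verts.mpr ⟨hsub ha, fun h => hu (h ▸ ha)⟩, ?_⟩
    intro a ha b hb hab
    exact ⟨hadj a ha b hb hab, fun h => hu (h ▸ ha), fun h => hu (h ▸ hb)⟩

/-- the link graph of a simplex -/
noncomputable def linkG (L : FGraph V) (w : Finset V) : FGraph V :=
  L.induce (fun a => ∀ b ∈ w, L.Adj b a)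

theorem mem_linkG_verts {L : FGraph V} {w : Finset V} {a : V} :
    a ∈ (linkG L w).verts ↔ a ∈ L.verts ∧ ∀ b ∈ w, L.Adj b a := by
  simp only [linkG, FGraph.induce, Finset.mem_filter]

theorem linkG_adj {L : FGraph V} {w : Finset V} {a b : V} :
    (linkG L w).Adj a b ↔ L.Adj a b ∧ (∀ c ∈ w, L.Adj c a) ∧ (∀ c ∈ w, L.Adj c b) :=
  Iff.rfl

theorem linkG_singleton (L : FGraph V) (v : V) : linkG L {v} = L.unitSphere v := by
  apply induce_congr
  intro a
  simp

theorem linkG_insert {L : FGraph V} {v : V} {w : Finset V}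
    (hadj : ∀ c ∈ w, L.Adj v c) :
    linkG L (insert v w) = linkG (L.unitSphere v) w := by
  apply fext
  · ext a
    simp only [mem_linkG_verts, mem_unitSphere_verts]
    constructor
    · intro ⟨h1, h2⟩
      have hva : L.Adj v a := h2 v (Finset.mem_insert_self v w)
      refine ⟨⟨h1, hva⟩, ?_⟩
      intro c hc
      exact ⟨h2 c (Finset.mem_insert_of_mem hc), hadj c hc, hva⟩
    · intro ⟨⟨h1, hva⟩, h2⟩
      refine ⟨h1, ?_⟩
      intro c hc
      rcases Finset.mem_insert.mp hc with rfl | hc'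
      · exact hva
      · exact (h2 c hc').1
  · intro a b
    simp only [linkG_adj, unitSphere_adj]
    constructor
    · intro ⟨h1, h2, h3⟩
      have hva : L.Adj v a := h2 v (Finset.mem_insert_self v w)
      have hvb : L.Adj v b := h3 v (Finset.mem_insert_self v w)
      exact ⟨⟨h1, hva, hvb⟩,
        fun c hc => ⟨h2 c (Finset.mem_insert_of_mem hc), hadj c hc, hva⟩,
        fun c hc => ⟨h3 c (Finset.mem_insert_of_mem hc), hadj c hc, hvb⟩⟩
    · intro ⟨⟨h1, hva, hvb⟩, h2, h3⟩
      refine ⟨h1, ?_, ?_⟩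
      · intro c hc
        rcases Finset.mem_insert.mp hc with rfl | hc'
        · exact hva
        · exact (h2 c hc').1
      · intro c hc
        rcases Finset.mem_insert.mp hc with rfl | hc'
        · exact hvb
        · exact (h3 c hc').1

/-- the link of a simplex in a manifold is a sphere of codimension card -/
theorem link_sphere : ∀ (k : ℕ) (c : ℤ) (L : FGraph V) (w : Finset V),
    w.card ≤ k → IsManifold c L → L.IsSimplex w →
    IsSphere (c - w.card) (linkG L w) := by
  intro k
  induction k with
  | zero =>
    intro c L w hk _ hw
    exfalso
    have := Finset.card_pos.mpr hw.1
    omega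
  | succ k ihk =>
    intro c L w hk hmL hw
    obtain ⟨v, hv⟩ := hw.1
    have hvverts : v ∈ L.verts := hw.2.1 hv
    have hSv : IsSphere (c - 1) (L.unitSphere v) := (manifold_cases hmL).2 v hvverts
    rcases Finset.eq_empty_or_nonempty (w.erase v) with hrest | hrest
    · -- w = {v}
      have hwv : w = {v} := by
        ext a
        constructor
        · intro ha
          by_contra hne
          have : a ∈ w.erase v := Finset.mem_erase.mpr
            ⟨fun h => hne (h ▸ Finset.mem_singleton_self a), ha⟩
          rw [hrest] at this
          simp at this
        · intro ha
          exact (Finset.mem_singleton.mp ha) ▸ hv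
      rw [hwv, linkG_singleton]
      have : c - ({v} : Finset V).card = c - 1 := by simp
      rw [this]
      exact hSv
    · -- recursive case
      have hvw : w = insert v (w.erase v) := (Finset.insert_erase hv).symm
      have hadjv : ∀ c' ∈ w.erase v, L.Adj v c' := by
        intro c' hc'
        rcases Finset.mem_erase.mp hc' with ⟨hne, hcw⟩
        exact L.symm (hw.2.2 c' hcw v hv hne)
      have hlink : linkG L w = linkG (L.unitSphere v) (w.erase v) := by
        conv_lhs => rw [hvw]
        exact linkG_insert hadjv
      rw [hlink]
      -- the unit sphere is a manifold (it has vertices)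
      have hmS : IsManifold (c - 1) (L.unitSphere v) := by
        rcases sphere_cases hSv with ⟨_, hempty⟩ | ⟨hm, _⟩
        · exfalso
          obtain ⟨a, ha⟩ := hrest
          have haS : a ∈ (L.unitSphere v).verts := by
            rw [mem_unitSphere_verts]
            exact ⟨hw.2.1 (Finset.mem_erase.mp ha).2, hadjv a ha⟩
          rw [hempty] at haS
          simp at haS
        · exact hm
      have hwS : (L.unitSphere v).IsSimplex (w.erase v) := by
        rw [unitSphere_simplex_iff]
        exact ⟨sub_simplex hw (Finset.erase_subset v w) hrest, hadjv⟩
      have hrec := ihk (c - 1) (L.unitSphere v) (w.erase v) ?_ hmS hwS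
      · have hcard : w.card = (w.erase v).card + 1 := by
          rw [Finset.card_erase_of_mem hv]
          have := Finset.card_pos.mpr hw.1
          omega
        have : c - 1 - ((w.erase v).card : ℤ) = c - w.card := by
          rw [hcard]
          push_cast
          ring
        rwa [this] at hrec
      · have := Finset.card_erase_of_mem hv
        omega

end MS

namespace MS
open FGraph

variable {V : Type}

theorem insert_sdiff_self' {u : V} {x : Finset V} (hu : u ∉ x) :
    insert u x \ x = {u} := by
  ext a
  simp only [Finset.mem_sdiff, Finset.mem_insert, Finset.mem_singleton]
  constructor
  · rintro ⟨rfl | hax, hax'⟩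
    · rfl
    · exact absurd hax hax'
  · rintro rfl
    exact ⟨Or.inl rfl, hu⟩

theorem singleton_simplex {L : FGraph V} {u : V} (hu : u ∈ L.verts) :
    L.IsSimplex {u} := by
  refine ⟨⟨u, Finset.mem_singleton_self u⟩, ?_, ?_⟩
  · intro a ha
    exact (Finset.mem_singleton.mp ha) ▸ hu
  · intro a ha b hb hab
    rw [Finset.mem_singleton] at ha hb
    exact absurd (ha.trans hb.symm) hab

/-- the family of simplices strictly containing the base x, within x ∪ L -/
noncomputable def scFam (x : Finset V) (L : FGraph V) : Finset (Finset V) :=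
  ((x ∪ L.verts).powerset).filter (fun y => x ⊂ y ∧ L.IsSimplex (y \ x))

theorem mem_scFam {x y : Finset V} {L : FGraph V} :
    y ∈ scFam x L ↔ y ⊆ x ∪ L.verts ∧ x ⊂ y ∧ L.IsSimplex (y \ x) := by
  simp only [scFam, Finset.mem_filter, Finset.mem_powerset]

theorem insert_mem_scFam {L : FGraph V} {x : Finset V} (hdj : Disjoint x L.verts)
    {u : V} (hu : u ∈ L.verts) : insert u x ∈ scFam x L := by
  have hux : u ∉ x := Finset.disjoint_right.mp hdj hu
  rw [mem_scFam]
  refine ⟨?_, ?_, ?_⟩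
  · intro a ha
    rcases Finset.mem_insert.mp ha with rfl | hax
    · exact Finset.mem_union_right _ hu
    · exact Finset.mem_union_left _ hax
  · exact Finset.ssubset_insert hux
  · rw [insert_sdiff_self' hux]
    exact singleton_simplex hu

theorem scFam_erase_filter {L : FGraph V} {x : Finset V} {u : V} (hux : u ∉ x) :
    (scFam x L).filter (fun y => u ∉ y) = scFam x (L.erase u) := by
  ext y
  simp only [Finset.mem_filter, mem_scFam]
  constructor
  · rintro ⟨⟨hsub, hxy, hsim⟩, huy⟩
    refine ⟨?_, hxy, ?_⟩
    · intro a ha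
      rcases Finset.mem_union.mp (hsub ha) with hax | haV
      · exact Finset.mem_union_left _ hax
      · exact Finset.mem_union_right _ (mem_erase_verts.mpr ⟨haV, fun h => huy (h ▸ ha)⟩)
    · exact erase_simplex_iff.mpr ⟨hsim, fun h => huy (Finset.mem_sdiff.mp h).1⟩
  · rintro ⟨hsub, hxy, hsim⟩
    rcases erase_simplex_iff.mp hsim with ⟨hsimL, husd⟩
    refine ⟨⟨?_, hxy, hsimL⟩, ?_⟩
    · intro a ha
      rcases Finset.mem_union.mp (hsub ha) with hax | haV
      · exact Finset.mem_union_left _ hax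
      · exact Finset.mem_union_right _ (mem_erase_verts.mp haV).1
    · intro huy
      exact husd (Finset.mem_sdiff.mpr ⟨huy, hux⟩)

/-- removing the cone point `insert u x` from scFam, given the rest is contractible -/
theorem sc_sweep {L : FGraph V} {x : Finset V} (hdj : Disjoint x L.verts) {u : V}
    (hu : u ∈ L.verts)
    (hbase : Contractible (inclG ((scFam x L).filter (fun y => u ∉ y)))) :
    Contractible (inclG ((scFam x L).erase (insert u x))) := by
  have hux : u ∉ x := Finset.disjoint_right.mp hdj hu
  set Ac := (scFam x L).filter (fun y => u ∉ y) with hAcdef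
  set A0 := (scFam x L).filter (fun y => u ∈ y ∧ y ≠ insert u x) with hA0def
  have hsplit : (scFam x L).erase (insert u x) = Ac ∪ A0 := by
    ext y
    simp only [hAcdef, hA0def, Finset.mem_erase, Finset.mem_union, Finset.mem_filter]
    constructor
    · rintro ⟨hne, hy⟩
      by_cases hc : u ∈ y
      · exact Or.inr ⟨hy, hc, hne⟩
      · exact Or.inl ⟨hy, hc⟩
    · rintro (⟨hy, hc⟩ | ⟨hy, _, hne⟩)
      · exact ⟨fun h => hc (h ▸ Finset.mem_insert_self u x), hy⟩
      · exact ⟨hne, hy⟩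
  rw [hsplit]
  apply sweep_min A0.card Ac A0 le_rfl
  · intro y hy z hz hyz
    simp only [hA0def, Finset.mem_filter] at hy
    simp only [hAcdef, Finset.mem_filter] at hz
    exact hz.2 (hyz hy.2.1)
  · -- H2' : lower sets in Ac are full intervals (UP)
    intro y hy
    simp only [hA0def, Finset.mem_filter, mem_scFam] at hy
    obtain ⟨⟨hysub, hxy, hysim⟩, huy, hyne⟩ := hy
    have hfe : Ac.filter (fun z => z ⊂ y) =
        ((y.erase u).powerset).filter (fun z => x ⊂ z) := by
      ext z
      simp only [hAcdef, Finset.mem_filter, mem_scFam, Finset.mem_powerset]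
      constructor
      · rintro ⟨⟨⟨hzsub, hxz, hzsim⟩, huz⟩, hzy⟩
        refine ⟨?_, hxz⟩
        intro a ha
        exact Finset.mem_erase.mpr ⟨fun h => huz (h ▸ ha), hzy.subset ha⟩
      · rintro ⟨hzey, hxz⟩
        have hzy : z ⊆ y := hzey.trans (Finset.erase_subset u y)
        have huz : u ∉ z := fun h => (Finset.mem_erase.mp (hzey h)).1 rfl
        refine ⟨⟨⟨hzy.trans hysub, hxz, ?_⟩, huz⟩, ?_⟩
        · apply sub_simplex hysim
          · intro a ha
            rcases Finset.mem_sdiff.mp ha with ⟨haz, hax⟩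
            exact Finset.mem_sdiff.mpr ⟨hzy haz, hax⟩
          · obtain ⟨a, haz, hax⟩ := Finset.exists_of_ssubset hxz
            exact ⟨a, Finset.mem_sdiff.mpr ⟨haz, hax⟩⟩
        · exact lt_of_le_of_lt hzey (Finset.erase_ssubset huy)
    rw [hfe]
    have hxey : x ⊂ y.erase u := by
      refine Finset.ssubset_iff_subset_ne.mpr ⟨?_, ?_⟩
      · intro a hax
        exact Finset.mem_erase.mpr ⟨fun h => hux (h ▸ hax), hxy.subset hax⟩
      · intro hEq
        apply hyne
        apply Finset.Subset.antisymm
        · intro a ha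
          by_cases hau : a = u
          · exact hau ▸ Finset.mem_insert_self u x
          · exact Finset.mem_insert_of_mem (hEq ▸ Finset.mem_erase.mpr ⟨hau, ha⟩)
        · intro a ha
          rcases Finset.mem_insert.mp ha with rfl | hax
          · exact huy
          · exact hxy.subset hax
    apply up_contr ((y.erase u) \ x).card (((y.erase u).powerset).filter (fun z => x ⊂ z)).card
      x (y.erase u) _ le_rfl le_rfl
    · intro z hz
      rcases Finset.mem_filter.mp hz with ⟨h1, h2⟩
      exact ⟨h2, Finset.mem_powerset.mp h1⟩
    · intro z hz z' hzz' hz'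
      rcases Finset.mem_filter.mp hz with ⟨_, h2⟩
      exact Finset.mem_filter.mpr ⟨Finset.mem_powerset.mpr hz', lt_of_lt_of_le h2 hzz'⟩
    · exact Finset.mem_filter.mpr ⟨Finset.mem_powerset.mpr le_rfl, hxey⟩
  · exact hbase

theorem sc_unitSphere_min {L : FGraph V} {x : Finset V} (hdj : Disjoint x L.verts)
    {u : V} (hu : u ∈ L.verts) :
    (inclG (scFam x L)).unitSphere (insert u x) =
      inclG (scFam (insert u x) (L.unitSphere u)) := by
  have hux : u ∉ x := Finset.disjoint_right.mp hdj hu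
  rw [inclG_unitSphere (insert_mem_scFam hdj hu)]
  congr 1
  ext z
  simp only [Finset.mem_filter, mem_scFam]
  constructor
  · rintro ⟨⟨hzsub, hxz, hzsim⟩, hc | hc⟩
    · -- insert u x ⊂ z
      have hiz : insert u x ⊆ z := hc.subset
      have huz : u ∈ z := hiz (Finset.mem_insert_self u x)
      have huzx : u ∈ z \ x := Finset.mem_sdiff.mpr ⟨huz, hux⟩
      have hzd : z \ insert u x = (z \ x).erase u := by
        ext a
        simp only [Finset.mem_sdiff, Finset.mem_erase, Finset.mem_insert]
        tauto
      refine ⟨?_, hc, ?_⟩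
      · intro a haz
        by_cases hax : a ∈ insert u x
        · exact Finset.mem_union_left _ hax
        · apply Finset.mem_union_right
          rw [mem_unitSphere_verts]
          have haxz : a ∈ z \ x :=
            Finset.mem_sdiff.mpr ⟨haz, fun h => hax (Finset.mem_insert_of_mem h)⟩
          refine ⟨hzsim.2.1 haxz, hzsim.2.2 u huzx a haxz ?_⟩
          intro h
          exact hax (h ▸ Finset.mem_insert_self u x)
      · rw [hzd, unitSphere_simplex_iff]
        obtain ⟨a, haz, hai⟩ := Finset.exists_of_ssubset hc
        refine ⟨sub_simplex hzsim (Finset.erase_subset _ _) ⟨a, ?_⟩, ?_⟩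
        · exact Finset.mem_erase.mpr ⟨fun h => hai (h ▸ Finset.mem_insert_self u x),
            Finset.mem_sdiff.mpr ⟨haz, fun h => hai (Finset.mem_insert_of_mem h)⟩⟩
        · intro a' ha'
          rcases Finset.mem_erase.mp ha' with ⟨ha'u, ha'zx⟩
          exact hzsim.2.2 u huzx a' ha'zx (fun h => ha'u h.symm)
    · -- z ⊂ insert u x : impossible
      exfalso
      have hzsub' : z ⊆ insert u x := hc.subset
      have : z \ x ⊆ {u} := by
        intro a ha
        rcases Finset.mem_sdiff.mp ha with ⟨haz, hax⟩
        rcases Finset.mem_insert.mp (hzsub' haz) with rfl | h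
        · exact Finset.mem_singleton_self a
        · exact absurd h hax
      have hzxu : z \ x = {u} := by
        apply Finset.Subset.antisymm this
        intro a ha
        rw [Finset.mem_singleton] at ha
        subst ha
        obtain ⟨w, hw⟩ := hzsim.1
        have := this hw
        rw [Finset.mem_singleton] at this
        exact this ▸ hw
      apply hc.ne
      apply Finset.Subset.antisymm hzsub'
      intro a ha
      rcases Finset.mem_insert.mp ha with rfl | hax
      · have : a ∈ z \ x := hzxu ▸ Finset.mem_singleton_self a
        exact (Finset.mem_sdiff.mp this).1
      · exact hxz.subset hax
  · rintro ⟨hzsub, hiz, hzsim⟩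
    have huz : u ∈ z := hiz.subset (Finset.mem_insert_self u x)
    rcases unitSphere_simplex_iff.mp hzsim with ⟨hsimL, hAdj⟩
    have hzxsplit : z \ x = insert u (z \ insert u x) := by
      ext a
      simp only [Finset.mem_sdiff, Finset.mem_insert]
      constructor
      · rintro ⟨haz, hax⟩
        by_cases hau : a = u
        · exact Or.inl hau
        · exact Or.inr ⟨haz, fun h => (h.elim hau hax)⟩
      · rintro (rfl | ⟨haz, hax⟩)
        · exact ⟨huz, hux⟩
        · exact ⟨haz, fun h => hax (Or.inr h)⟩
    refine ⟨⟨?_, ?_, ?_⟩, Or.inl hiz⟩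
    · intro a haz
      rcases Finset.mem_union.mp (hzsub haz) with hai | haS
      · rcases Finset.mem_insert.mp hai with rfl | hax
        · exact Finset.mem_union_right _ hu
        · exact Finset.mem_union_left _ hax
      · exact Finset.mem_union_right _ (mem_unitSphere_verts.mp haS).1
    · exact lt_of_le_of_lt (Finset.subset_insert u x) hiz
    · rw [hzxsplit]
      obtain ⟨hne', hsub', hadj'⟩ := hsimL
      refine ⟨⟨u, Finset.mem_insert_self _ _⟩, ?_, ?_⟩
      · intro a ha
        rcases Finset.mem_insert.mp ha with rfl | ha'
        · exact hu
        · exact hsub' ha'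
      · intro a ha b hb hab
        rcases Finset.mem_insert.mp ha with rfl | ha' <;>
          rcases Finset.mem_insert.mp hb with rfl | hb'
        · exact absurd rfl hab
        · exact hAdj b hb'
        · exact L.symm (hAdj a ha')
        · exact hadj' a ha' b hb' hab

theorem disjoint_insert_unitSphere {L : FGraph V} {x : Finset V}
    (hdj : Disjoint x L.verts) {u : V} :
    Disjoint (insert u x) (L.unitSphere u).verts := by
  rw [Finset.disjoint_left]
  intro a ha haS
  rcases mem_unitSphere_verts.mp haS with ⟨haV, hadj⟩
  rcases Finset.mem_insert.mp ha with rfl | hax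
  · exact L.loopless a hadj
  · exact Finset.disjoint_left.mp hdj hax haV

/-- R2 : refinement (above a base) of a contractible graph is contractible -/
theorem sc_contr {L : FGraph V} (h : Contractible L) :
    ∀ (x : Finset V), Disjoint x L.verts → Contractible (inclG (scFam x L)) := by
  induction h with
  | single Gx vtx hv =>
    intro x hdj
    have hvV : vtx ∈ Gx.verts := hv ▸ Finset.mem_singleton_self vtx
    apply contr_single (v := insert vtx x)
    ext y
    simp only [mem_scFam, Finset.mem_singleton]
    constructor
    · rintro ⟨hysub, hxy, hysim⟩
      have : y \ x = {vtx} := by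
        apply Finset.Subset.antisymm
        · intro a ha
          rcases Finset.mem_sdiff.mp ha with ⟨hay, hax⟩
          rcases Finset.mem_union.mp (hysub hay) with h | h
          · exact absurd h hax
          · rwa [hv] at h
        · intro a ha
          rw [Finset.mem_singleton] at ha
          obtain ⟨w, hw⟩ := hysim.1
          have hwv : w ∈ ({vtx} : Finset V) := hv ▸ hysim.2.1 hw
          rw [Finset.mem_singleton] at hwv
          rw [ha, ← hwv]
          exact hw
      have hyeq : y = x ∪ (y \ x) := (Finset.union_sdiff_of_subset hxy.subset).symm
      rw [hyeq, this]
      ext a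
      simp [Finset.mem_union, Finset.mem_insert, or_comm]
    · rintro rfl
      exact mem_scFam.mp (insert_mem_scFam (hv ▸ hdj) hvV)
  | step Gx u hu h1 h2 ih1 ih2 =>
    intro x hdj
    apply Contractible.step _ (insert u x) (insert_mem_scFam hdj hu)
    · rw [sc_unitSphere_min hdj hu]
      exact ih1 (insert u x) (disjoint_insert_unitSphere hdj)
    · rw [inclG_erase]
      apply sc_sweep hdj hu
      rw [scFam_erase_filter (Finset.disjoint_right.mp hdj hu)]
      apply ih2 x
      rw [Finset.disjoint_right]
      intro a haE
      exact Finset.disjoint_right.mp hdj (mem_erase_verts.mp haE).1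

end MS

namespace MS
open FGraph

variable {V : Type}

theorem disjoint_base_linkG {L : FGraph V} {x y : Finset V} (hdj : Disjoint x L.verts)
    (hxy : x ⊆ y) (hyw : ∀ a ∈ y, a ∉ x → a ∈ y \ x) :
    Disjoint y (linkG L (y \ x)).verts := by
  rw [Finset.disjoint_left]
  intro a hay haV
  rcases mem_linkG_verts.mp haV with ⟨haL, hadj⟩
  by_cases hax : a ∈ x
  · exact Finset.disjoint_left.mp hdj hax haL
  · exact L.loopless a (hadj a (hyw a hay hax))

theorem sc_sphere : ∀ (n : ℕ) (c : ℤ) (L : FGraph V) (x : Finset V),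
    (c + 1).toNat ≤ n → IsSphere c L → Disjoint x L.verts →
    IsSphere c (inclG (scFam x L)) := by
  intro n
  induction n with
  | zero =>
    intro c L x hn hS hdj
    rcases sphere_cases hS with ⟨rfl, hempty⟩ | ⟨hm, _⟩
    · apply empty_sphere
      rw [Finset.eq_empty_iff_forall_notMem]
      intro y hy
      rcases mem_scFam.mp hy with ⟨_, hxy, hsim⟩
      obtain ⟨a, ha⟩ := hsim.1
      have := hsim.2.1 ha
      rw [hempty] at this
      simp at this
    · have := (manifold_cases hm).1
      omega
  | succ n ih =>
    intro c L x hn hS hdj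
    rcases sphere_cases hS with ⟨rfl, hempty⟩ | ⟨hm, v, hv, hce⟩
    · apply empty_sphere
      rw [Finset.eq_empty_iff_forall_notMem]
      intro y hy
      rcases mem_scFam.mp hy with ⟨_, hxy, hsim⟩
      obtain ⟨a, ha⟩ := hsim.1
      have := hsim.2.1 ha
      rw [hempty] at this
      simp at this
    have hc0 : 0 ≤ c := (manifold_cases hm).1
    apply IsSphere.punctured _ _ ?_ (insert v x) (insert_mem_scFam hdj hv) ?_
    · -- manifold
      apply IsManifold.intro _ hc0
      intro y hy
      have hyA : y ∈ scFam x L := hy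
      rcases mem_scFam.mp hyA with ⟨hysub, hxy, hysim⟩
      have hwne : (y \ x).Nonempty := hysim.1
      have hwcard : ((y \ x).card : ℤ) = (y.card : ℤ) - x.card := by
        rw [Finset.card_sdiff_of_subset hxy.subset]
        have := Finset.card_le_card hxy.subset
        push_cast
        omega
      have hwc1 : 1 ≤ (y \ x).card := Finset.card_pos.mpr hwne
      rw [inclG_unitSphere hyA]
      have hmemy : ∀ a ∈ y, a ∉ x → a ∈ y \ x :=
        fun a ha hax => Finset.mem_sdiff.mpr ⟨ha, hax⟩
      have hfe : (scFam x L).filter (fun z => cmp y z) =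
          (fFam y x [y \ x]) ∪ (scFam y (linkG L (y \ x))) := by
        ext z
        simp only [Finset.mem_filter, Finset.mem_union, mem_scFam, mem_fFam]
        constructor
        · rintro ⟨⟨hzsub, hxz, hzsim⟩, hyz | hzy⟩
          · -- y ⊂ z : upper
            apply Or.inr
            have hzmem : ∀ a ∈ z, a ∉ y → a ∈ (linkG L (y \ x)).verts := by
              intro a haz hay
              have hax : a ∉ x := fun h => hay (hxy.subset h)
              have hazx : a ∈ z \ x := Finset.mem_sdiff.mpr ⟨haz, hax⟩
              rw [mem_linkG_verts]
              refine ⟨hzsim.2.1 hazx, ?_⟩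
              intro b hb
              rcases Finset.mem_sdiff.mp hb with ⟨hby, hbx⟩
              have hbzx : b ∈ z \ x := Finset.mem_sdiff.mpr ⟨hyz.subset hby, hbx⟩
              exact hzsim.2.2 b hbzx a hazx (fun h => hay (h ▸ hby))
            refine ⟨?_, hyz, ?_⟩
            · intro a haz
              by_cases hay : a ∈ y
              · exact Finset.mem_union_left _ hay
              · exact Finset.mem_union_right _ (hzmem a haz hay)
            · refine ⟨?_, ?_, ?_⟩
              · obtain ⟨a, haz, hay⟩ := Finset.exists_of_ssubset hyz
                exact ⟨a, Finset.mem_sdiff.mpr ⟨haz, hay⟩⟩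
              · intro a ha
                rcases Finset.mem_sdiff.mp ha with ⟨haz, hay⟩
                exact hzmem a haz hay
              · intro a ha b hb hab
                rcases Finset.mem_sdiff.mp ha with ⟨haz, hay⟩
                rcases Finset.mem_sdiff.mp hb with ⟨hbz, hby⟩
                have hax : a ∈ z \ x := Finset.mem_sdiff.mpr
                  ⟨haz, fun h => hay (hxy.subset h)⟩
                have hbx : b ∈ z \ x := Finset.mem_sdiff.mpr
                  ⟨hbz, fun h => hby (hxy.subset h)⟩
                refine ⟨hzsim.2.2 a hax b hbx hab, ?_, ?_⟩
                · intro b' hb'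
                  exact (mem_linkG_verts.mp (hzmem a haz hay)).2 b' hb'
                · intro b' hb'
                  exact (mem_linkG_verts.mp (hzmem b hbz hby)).2 b' hb'
          · -- z ⊂ y : lower
            apply Or.inl
            obtain ⟨a, haz, hax⟩ := Finset.exists_of_ssubset hxz
            refine ⟨hzy.subset, hxz.subset, ?_, hzy.ne⟩
            intro t ht
            rw [List.mem_singleton] at ht
            subst ht
            exact ⟨a, Finset.mem_inter.mpr ⟨haz,
              Finset.mem_sdiff.mpr ⟨hzy.subset haz, hax⟩⟩⟩
        · rintro (⟨hzy, hxz, htz, hzney⟩ | ⟨hzsub, hyz, hzsim⟩)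
          · -- lower
            obtain ⟨a, ha⟩ := htz (y \ x) (by simp)
            rcases Finset.mem_inter.mp ha with ⟨haz, hayx⟩
            have hxzs : x ⊂ z := Finset.ssubset_iff_subset_ne.mpr ⟨hxz, ?_⟩
            · refine ⟨⟨hzy.trans hysub, hxzs, ?_⟩,
                Or.inr (Finset.ssubset_iff_subset_ne.mpr ⟨hzy, hzney⟩)⟩
              apply sub_simplex hysim
              · intro w hw
                rcases Finset.mem_sdiff.mp hw with ⟨hwz, hwx⟩
                exact Finset.mem_sdiff.mpr ⟨hzy hwz, hwx⟩
              · exact ⟨a, Finset.mem_sdiff.mpr ⟨haz, (Finset.mem_sdiff.mp hayx).2⟩⟩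
            · rintro rfl
              exact (Finset.mem_sdiff.mp hayx).2 haz
          · -- upper
            have hzwsim := hzsim
            have hzxsplit : z \ x = (y \ x) ∪ (z \ y) := by
              ext a
              simp only [Finset.mem_sdiff, Finset.mem_union]
              constructor
              · rintro ⟨haz, hax⟩
                by_cases hay : a ∈ y
                · exact Or.inl ⟨hay, hax⟩
                · exact Or.inr ⟨haz, hay⟩
              · rintro (⟨hay, hax⟩ | ⟨haz, hay⟩)
                · exact ⟨hyz.subset hay, hax⟩
                · exact ⟨haz, fun h => hay (hxy.subset h)⟩
            refine ⟨⟨?_, lt_trans hxy hyz, ?_⟩, Or.inl hyz⟩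
            · intro a haz
              rcases Finset.mem_union.mp (hzsub haz) with hay | haV
              · exact hysub hay
              · exact Finset.mem_union_right _ (mem_linkG_verts.mp haV).1
            · rw [hzxsplit]
              obtain ⟨hne', hsub', hadj'⟩ := hzsim
              refine ⟨?_, ?_, ?_⟩
              · obtain ⟨a, ha⟩ := hwne
                exact ⟨a, Finset.mem_union_left _ ha⟩
              · intro a ha
                rcases Finset.mem_union.mp ha with h | h
                · exact hysim.2.1 h
                · exact (mem_linkG_verts.mp (hsub' h)).1
              · intro a ha b hb hab
                rcases Finset.mem_union.mp ha with h1 | h1 <;>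
                  rcases Finset.mem_union.mp hb with h2 | h2
                · exact hysim.2.2 a h1 b h2 hab
                · exact (mem_linkG_verts.mp (hsub' h2)).2 a h1
                · exact L.symm ((mem_linkG_verts.mp (hsub' h1)).2 b h2)
                · exact (hadj' a h1 b h2 hab).1
      rw [hfe]
      have hlow : IsSphere ((y.card : ℤ) - x.card - 1 - 1) (inclG (fFam y x [y \ x])) := by
        have hrec := f_sphere (y \ x).card y x [y \ x] ?_ hxy.subset ?_ ?_ ?_ ?_ ?_
        · have hlen : (([y \ x] : List (Finset V)).length) = 1 := rfl
          rw [hlen] at hrec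
          exact_mod_cast hrec
        · exact le_rfl
        · simp only [unionL_cons, unionL_nil, Finset.union_empty]
          exact (Finset.union_sdiff_of_subset hxy.subset).symm
        · simp only [unionL_cons, unionL_nil, Finset.union_empty]
          exact Finset.disjoint_sdiff
        · intro t ht
          rw [List.mem_singleton] at ht
          exact ht ▸ hwne
        · simp
        · simp
      have hup : IsSphere (c - (y \ x).card) (inclG (scFam y (linkG L (y \ x)))) := by
        apply ih (c - (y \ x).card) (linkG L (y \ x)) y ?_ ?_ ?_
        · omega
        · exact link_sphere (y \ x).card c L (y \ x) le_rfl hm hysim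
        · exact disjoint_base_linkG hdj hxy.subset hmemy
      have hcross : Cross (fFam y x [y \ x]) (scFam y (linkG L (y \ x))) := by
        intro a ha b hb
        rw [mem_fFam] at ha
        rw [mem_scFam] at hb
        apply Or.inl
        have h1 : a ⊂ y := Finset.ssubset_iff_subset_ne.mpr ⟨ha.1, ha.2.2.2⟩
        exact h1.trans hb.2.1
      have := sphere_join hcross hlow hup
      have harith : ((y.card : ℤ) - x.card - 1 - 1) + (c - ((y \ x).card : ℤ)) + 1 = c - 1 := by
        rw [hwcard]
        ring
      rwa [harith] at this
    · -- punctured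
      rw [inclG_erase]
      apply sc_sweep hdj hv
      rw [scFam_erase_filter (Finset.disjoint_right.mp hdj hv)]
      apply sc_contr hce x
      rw [Finset.disjoint_right]
      intro a haE
      exact Finset.disjoint_right.mp hdj (mem_erase_verts.mp haE).1

end MS

namespace MS
open FGraph

variable {V : Type}

theorem mem_cls_verts {G : FGraph V} {ψ : V → ℂ} {e : Finset ℂ} {z : Finset V} :
    z ∈ (G.complexLevelSetE ψ e).verts ↔
      G.IsSimplex z ∧ ((∀ u ∈ e, u ∈ FGraph.signValues ψ 0 z) ∧
        3 ≤ (FGraph.signValues ψ 0 z).card) := by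
  simp only [FGraph.complexLevelSetE, FGraph.induce, FGraph.barycentric,
    Finset.mem_filter, Finset.mem_powerset]
  constructor
  · rintro ⟨⟨_, h2⟩, h3⟩
    exact ⟨h2, h3⟩
  · rintro ⟨h2, h3⟩
    exact ⟨⟨h2.2.1, h2⟩, h3⟩

theorem cls_adj {G : FGraph V} {ψ : V → ℂ} {e : Finset ℂ} {y z : Finset V} :
    (G.complexLevelSetE ψ e).Adj y z ↔
      (G.IsSimplex y ∧ G.IsSimplex z ∧ (y ⊂ z ∨ z ⊂ y)) ∧
        ((∀ u ∈ e, u ∈ FGraph.signValues ψ 0 y) ∧ 3 ≤ (FGraph.signValues ψ 0 y).card) ∧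
        ((∀ u ∈ e, u ∈ FGraph.signValues ψ 0 z) ∧ 3 ≤ (FGraph.signValues ψ 0 z).card) :=
  Iff.rfl

theorem mem_signValues {ψ : V → ℂ} {z : Finset V} {u : ℂ} :
    u ∈ FGraph.signValues ψ 0 z ↔ ∃ a ∈ z, csgn (ψ a - 0) = u := by
  simp only [FGraph.signValues, Finset.mem_image]

/-- main step: unit spheres in the level set are (d-3)-spheres -/
theorem cls_sphere_at (G : FGraph V) (d : ℤ) (hG : IsManifold d G) (ψ : V → ℂ)
    (ε₁ ε₂ : ℂ) (hne : ε₁ ≠ ε₂) (x : Finset V)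
    (hx : x ∈ (G.complexLevelSetE ψ {ε₁, ε₂}).verts) :
    IsSphere (d - 3) ((G.complexLevelSetE ψ {ε₁, ε₂}).unitSphere x) ∧ 2 ≤ d := by
  classical
  obtain ⟨hsx, hQx⟩ := mem_cls_verts.mp hx
  have hε₁ : ε₁ ∈ FGraph.signValues ψ 0 x := hQx.1 ε₁ (by simp)
  have hε₂ : ε₂ ∈ FGraph.signValues ψ 0 x := hQx.1 ε₂ (by simp)
  have hc3 := hQx.2
  set σ : V → ℂ := fun v => csgn (ψ v - 0) with hσdef
  set A₁ := x.filter (fun v => σ v = ε₁) with hA₁def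
  set A₂ := x.filter (fun v => σ v = ε₂) with hA₂def
  set D := x.filter (fun v => σ v ≠ ε₁ ∧ σ v ≠ ε₂) with hDdef
  -- basic facts about sign values as images of σ
  have hsv : ∀ z : Finset V, FGraph.signValues ψ 0 z = z.image σ := fun _ => rfl
  have hA₁sub : A₁ ⊆ x := Finset.filter_subset _ _
  have hA₂sub : A₂ ⊆ x := Finset.filter_subset _ _
  have hDsub : D ⊆ x := Finset.filter_subset _ _
  -- the third value
  have hthird : ∀ z : Finset V, 3 ≤ (z.image σ).card →
      ε₁ ∈ z.image σ → ε₂ ∈ z.image σ → ∃ a ∈ z, σ a ≠ ε₁ ∧ σ a ≠ ε₂ := by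
    intro z h3 h1 h2
    by_contra hcon
    push_neg at hcon
    have hsub : z.image σ ⊆ {ε₁, ε₂} := by
      intro u hu
      obtain ⟨a, ha, rfl⟩ := Finset.mem_image.mp hu
      rcases Classical.em (σ a = ε₁) with h | h
      · simp [h]
      · simp [hcon a ha h]
    have := Finset.card_le_card hsub
    have hle : ({ε₁, ε₂} : Finset ℂ).card ≤ 2 := Finset.card_insert_le _ _ |>.trans (by simp)
    omega
  -- the touching characterization of qualifying subsets
  have htouch : ∀ z : Finset V, z ⊆ x →
      (((∀ u ∈ ({ε₁, ε₂} : Finset ℂ), u ∈ FGraph.signValues ψ 0 z) ∧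
        3 ≤ (FGraph.signValues ψ 0 z).card) ↔
        ((z ∩ A₁).Nonempty ∧ (z ∩ A₂).Nonempty ∧ (z ∩ D).Nonempty)) := by
    intro z hzx
    rw [hsv]
    constructor
    · rintro ⟨hall, h3⟩
      have h1 : ε₁ ∈ z.image σ := hall ε₁ (by simp)
      have h2 : ε₂ ∈ z.image σ := hall ε₂ (by simp)
      obtain ⟨a1, ha1, hs1⟩ := Finset.mem_image.mp h1
      obtain ⟨a2, ha2, hs2⟩ := Finset.mem_image.mp h2
      obtain ⟨a3, ha3, hs3⟩ := hthird z h3 h1 h2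
      refine ⟨⟨a1, Finset.mem_inter.mpr ⟨ha1, Finset.mem_filter.mpr ⟨hzx ha1, hs1⟩⟩⟩,
        ⟨a2, Finset.mem_inter.mpr ⟨ha2, Finset.mem_filter.mpr ⟨hzx ha2, hs2⟩⟩⟩,
        ⟨a3, Finset.mem_inter.mpr ⟨ha3, Finset.mem_filter.mpr ⟨hzx ha3, hs3⟩⟩⟩⟩
    · rintro ⟨⟨a1, ha1⟩, ⟨a2, ha2⟩, ⟨a3, ha3⟩⟩
      rcases Finset.mem_inter.mp ha1 with ⟨ha1z, ha1A⟩
      rcases Finset.mem_inter.mp ha2 with ⟨ha2z, ha2A⟩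
      rcases Finset.mem_inter.mp ha3 with ⟨ha3z, ha3A⟩
      have hs1 : σ a1 = ε₁ := (Finset.mem_filter.mp ha1A).2
      have hs2 : σ a2 = ε₂ := (Finset.mem_filter.mp ha2A).2
      obtain ⟨hs31, hs32⟩ : σ a3 ≠ ε₁ ∧ σ a3 ≠ ε₂ := (Finset.mem_filter.mp ha3A).2
      have h1 : ε₁ ∈ z.image σ := Finset.mem_image.mpr ⟨a1, ha1z, hs1⟩
      have h2 : ε₂ ∈ z.image σ := Finset.mem_image.mpr ⟨a2, ha2z, hs2⟩
      have h3' : σ a3 ∈ z.image σ := Finset.mem_image.mpr ⟨a3, ha3z, rfl⟩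
      constructor
      · intro u hu
        rcases Finset.mem_insert.mp hu with rfl | hu
        · exact h1
        · exact (Finset.mem_singleton.mp hu) ▸ h2
      · have hsub : ({ε₁, ε₂, σ a3} : Finset ℂ) ⊆ z.image σ := by
          intro u hu
          rcases Finset.mem_insert.mp hu with rfl | hu
          · exact h1
          rcases Finset.mem_insert.mp hu with rfl | hu
          · exact h2
          · exact (Finset.mem_singleton.mp hu) ▸ h3'
        have hcard : ({ε₁, ε₂, σ a3} : Finset ℂ).card = 3 := by
          rw [Finset.card_insert_of_notMem, Finset.card_insert_of_notMem]
          · simp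
          · simp [Ne.symm hs32]
          · simp only [Finset.mem_insert, Finset.mem_singleton]
            push_neg
            exact ⟨hne, Ne.symm hs31⟩
        calc 3 = ({ε₁, ε₂, σ a3} : Finset ℂ).card := hcard.symm
        _ ≤ (z.image σ).card := Finset.card_le_card hsub
  -- blocks are nonempty and partition x
  have hA₁ne : A₁.Nonempty := by
    obtain ⟨a, ha, hs⟩ := Finset.mem_image.mp (hsv x ▸ hε₁)
    exact ⟨a, Finset.mem_filter.mpr ⟨ha, hs⟩⟩
  have hA₂ne : A₂.Nonempty := by
    obtain ⟨a, ha, hs⟩ := Finset.mem_image.mp (hsv x ▸ hε₂)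
    exact ⟨a, Finset.mem_filter.mpr ⟨ha, hs⟩⟩
  have hDne : D.Nonempty := by
    obtain ⟨a, ha, hs⟩ := hthird x (hsv x ▸ hc3) (hsv x ▸ hε₁) (hsv x ▸ hε₂)
    exact ⟨a, Finset.mem_filter.mpr ⟨ha, hs⟩⟩
  have hpart : x = ∅ ∪ unionL [A₁, A₂, D] := by
    simp only [unionL_cons, unionL_nil, Finset.union_empty, Finset.empty_union]
    ext v
    simp only [Finset.mem_union, hA₁def, hA₂def, hDdef, Finset.mem_filter]
    constructor
    · intro hv
      rcases Classical.em (σ v = ε₁) with h1 | h1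
      · exact Or.inl ⟨hv, h1⟩
      rcases Classical.em (σ v = ε₂) with h2 | h2
      · exact Or.inr (Or.inl ⟨hv, h2⟩)
      · exact Or.inr (Or.inr ⟨hv, h1, h2⟩)
    · rintro (⟨hv, _⟩ | ⟨hv, _⟩ | ⟨hv, _⟩) <;> exact hv
  have hpw : List.Pairwise Disjoint [A₁, A₂, D] := by
    refine List.pairwise_cons.mpr ⟨?_, List.pairwise_cons.mpr ⟨?_, List.pairwise_singleton _ _⟩⟩
    · intro t ht
      rcases List.mem_cons.mp ht with rfl | ht
      · rw [Finset.disjoint_left]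
        intro a ha1 ha2
        have h1 := (Finset.mem_filter.mp ha1).2
        have h2 := (Finset.mem_filter.mp ha2).2
        exact hne (h1 ▸ h2 ▸ rfl)
      · rw [List.mem_singleton] at ht
        subst ht
        rw [Finset.disjoint_left]
        intro a ha1 ha2
        exact (Finset.mem_filter.mp ha2).2.1 (Finset.mem_filter.mp ha1).2
    · intro t ht
      rw [List.mem_singleton] at ht
      subst ht
      rw [Finset.disjoint_left]
      intro a ha1 ha2
      exact (Finset.mem_filter.mp ha2).2.2 (Finset.mem_filter.mp ha1).2
  -- the lower factor is a sphere
  have hAs : IsSphere ((x.card : ℤ) - 0 - 3 - 1) (inclG (fFam x ∅ [A₁, A₂, D])) := by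
    have := f_sphere (x \ ∅).card x ∅ [A₁, A₂, D] le_rfl (Finset.empty_subset x)
      hpart (by simp) ?_ hpw (by simp)
    · simpa using this
    · intro s hs
      rcases List.mem_cons.mp hs with rfl | hs
      · exact hA₁ne
      rcases List.mem_cons.mp hs with rfl | hs
      · exact hA₂ne
      · rw [List.mem_singleton] at hs
        exact hs ▸ hDne
  -- the link is a sphere, hence the upper factor too
  have hlink : IsSphere (d - x.card) (linkG G x) :=
    link_sphere x.card d G x le_rfl hG hsx
  have hdjlink : Disjoint x (linkG G x).verts := by
    rw [Finset.disjoint_left]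
    intro a hax haV
    exact G.loopless a ((mem_linkG_verts.mp haV).2 a hax)
  have hBs : IsSphere (d - x.card) (inclG (scFam x (linkG G x))) :=
    sc_sphere (d - x.card + 1).toNat _ _ x le_rfl hlink hdjlink
  -- dimension bounds
  have hdx : -1 ≤ d - x.card := sphere_dim_ge hlink
  have hx3 : 3 ≤ x.card := by
    have h1 : (x.image σ).card ≤ x.card := Finset.card_image_le
    have := hsv x ▸ hc3
    omega
  have hd2 : 2 ≤ d := by omega
  refine ⟨?_, hd2⟩
  -- the unit sphere is the join of the two factors
  set cls := G.complexLevelSetE ψ {ε₁, ε₂} with hclsdef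
  set Aset := fFam x ∅ [A₁, A₂, D] with hAsetdef
  set Bset := scFam x (linkG G x) with hBsetdef
  have hkey : ∀ z, (z ∈ cls.verts ∧ cls.Adj x z) ↔ z ∈ Aset ∪ Bset := by
    intro z
    constructor
    · rintro ⟨hzv, hzadj⟩
      obtain ⟨hsz, hQz⟩ := mem_cls_verts.mp hzv
      rcases (cls_adj.mp hzadj).1.2.2 with hc | hc
      · -- x ⊂ z : Bset
        apply Finset.mem_union_right
        rw [hBsetdef, mem_scFam]
        have hzmem : ∀ a ∈ z, a ∉ x → a ∈ (linkG G x).verts := by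
          intro a haz hax
          rw [mem_linkG_verts]
          refine ⟨hsz.2.1 haz, ?_⟩
          intro b hb
          exact hsz.2.2 b (hc.subset hb) a haz (fun h => hax (h ▸ hb))
        refine ⟨?_, hc, ?_, ?_, ?_⟩
        · intro a haz
          by_cases hax : a ∈ x
          · exact Finset.mem_union_left _ hax
          · exact Finset.mem_union_right _ (hzmem a haz hax)
        · obtain ⟨a, haz, hax⟩ := Finset.exists_of_ssubset hc
          exact ⟨a, Finset.mem_sdiff.mpr ⟨haz, hax⟩⟩
        · intro a ha
          rcases Finset.mem_sdiff.mp ha with ⟨haz, hax⟩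
          exact hzmem a haz hax
        · intro a ha b hb hab
          rcases Finset.mem_sdiff.mp ha with ⟨haz, hax⟩
          rcases Finset.mem_sdiff.mp hb with ⟨hbz, hbx⟩
          exact ⟨hsz.2.2 a haz b hbz hab,
            (mem_linkG_verts.mp (hzmem a haz hax)).2,
            (mem_linkG_verts.mp (hzmem b hbz hbx)).2⟩
      · -- z ⊂ x : Aset
        apply Finset.mem_union_left
        rw [hAsetdef, mem_fFam]
        obtain ⟨ht1, ht2, ht3⟩ := (htouch z hc.subset).mp hQz
        refine ⟨hc.subset, Finset.empty_subset z, ?_, hc.ne⟩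
        intro s hs
        rcases List.mem_cons.mp hs with rfl | hs
        · exact ht1
        rcases List.mem_cons.mp hs with rfl | hs
        · exact ht2
        · rw [List.mem_singleton] at hs
          exact hs ▸ ht3
    · intro hzU
      rcases Finset.mem_union.mp hzU with hzA | hzB
      · -- Aset
        rw [hAsetdef, mem_fFam] at hzA
        obtain ⟨hzx, _, htz, hzne⟩ := hzA
        have ht1 := htz A₁ (by simp)
        have ht2 := htz A₂ (by simp)
        have ht3 := htz D (by simp)
        have hzne' : z.Nonempty := by
          obtain ⟨a, ha⟩ := ht1
          exact ⟨a, (Finset.mem_inter.mp ha).1⟩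
        have hsz : G.IsSimplex z := sub_simplex hsx hzx hzne'
        have hQz : (∀ u ∈ ({ε₁, ε₂} : Finset ℂ), u ∈ FGraph.signValues ψ 0 z) ∧
            3 ≤ (FGraph.signValues ψ 0 z).card :=
          (htouch z hzx).mpr ⟨ht1, ht2, ht3⟩
        have hzv : z ∈ cls.verts := mem_cls_verts.mpr ⟨hsz, hQz⟩
        refine ⟨hzv, cls_adj.mpr ⟨⟨hsx, hsz, Or.inr (Finset.ssubset_iff_subset_ne.mpr ⟨hzx, hzne⟩)⟩, hQx, hQz⟩⟩
      · -- Bset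
        rw [hBsetdef, mem_scFam] at hzB
        obtain ⟨hzsub, hxz, hzsim⟩ := hzB
        have hsz : G.IsSimplex z := by
          refine ⟨hsx.1.mono hxz.subset, ?_, ?_⟩
          · intro a haz
            rcases Finset.mem_union.mp (hzsub haz) with hax | haV
            · exact hsx.2.1 hax
            · exact (mem_linkG_verts.mp haV).1
          · intro a ha b hb hab
            by_cases hax : a ∈ x <;> by_cases hbx : b ∈ x
            · exact hsx.2.2 a hax b hbx hab
            · have hbV : b ∈ (linkG G x).verts := hzsim.2.1 (Finset.mem_sdiff.mpr ⟨hb, hbx⟩)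
              exact (mem_linkG_verts.mp hbV).2 a hax
            · have haV : a ∈ (linkG G x).verts := hzsim.2.1 (Finset.mem_sdiff.mpr ⟨ha, hax⟩)
              exact G.symm ((mem_linkG_verts.mp haV).2 b hbx)
            · exact (hzsim.2.2 a (Finset.mem_sdiff.mpr ⟨ha, hax⟩)
                b (Finset.mem_sdiff.mpr ⟨hb, hbx⟩) hab).1
        have hsvsub : FGraph.signValues ψ 0 x ⊆ FGraph.signValues ψ 0 z := by
          rw [hsv, hsv]
          exact Finset.image_subset_image hxz.subset
        have hQz : (∀ u ∈ ({ε₁, ε₂} : Finset ℂ), u ∈ FGraph.signValues ψ 0 z) ∧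
            3 ≤ (FGraph.signValues ψ 0 z).card :=
          ⟨fun u hu => hsvsub (hQx.1 u hu), le_trans hc3 (Finset.card_le_card hsvsub)⟩
        have hzv : z ∈ cls.verts := mem_cls_verts.mpr ⟨hsz, hQz⟩
        exact ⟨hzv, cls_adj.mpr ⟨⟨hsx, hsz, Or.inl hxz⟩, hQx, hQz⟩⟩
  have hgraph : cls.unitSphere x = inclG (Aset ∪ Bset) := by
    apply fext
    · ext z
      show z ∈ Finset.filter _ _ ↔ _
      rw [Finset.mem_filter, inclG_verts]
      exact hkey z
    · intro a b
      show cls.Adj a b ∧ cls.Adj x a ∧ cls.Adj x b ↔ (inclG (Aset ∪ Bset)).Adj a b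
      rw [inclG_adj]
      constructor
      · rintro ⟨hab, hxa, hxb⟩
        refine ⟨(hkey a).mp ⟨cls.mem_of_adj (cls.symm hxa), hxa⟩,
          (hkey b).mp ⟨cls.mem_of_adj (cls.symm hxb), hxb⟩, ?_⟩
        exact (cls_adj.mp hab).1.2.2
      · rintro ⟨haU, hbU, hab⟩
        obtain ⟨hav, hxa⟩ := (hkey a).mpr haU
        obtain ⟨hbv, hxb⟩ := (hkey b).mpr hbU
        obtain ⟨hsa, hQa⟩ := mem_cls_verts.mp hav
        obtain ⟨hsb, hQb⟩ := mem_cls_verts.mp hbv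
        exact ⟨cls_adj.mpr ⟨⟨hsa, hsb, hab⟩, hQa, hQb⟩, hxa, hxb⟩
  rw [hgraph]
  have hcross : Cross Aset Bset := by
    intro a ha b hb
    rw [hAsetdef, mem_fFam] at ha
    rw [hBsetdef, mem_scFam] at hb
    apply Or.inl
    have h1 : a ⊂ x := Finset.ssubset_iff_subset_ne.mpr ⟨ha.1, ha.2.2.2⟩
    exact h1.trans hb.2.1
  have := sphere_join hcross hAs hBs
  have harith : ((x.card : ℤ) - 0 - 3 - 1) + (d - (x.card : ℤ)) + 1 = d - 3 := by ring
  rwa [harith] at this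

end MS

/-- If `G` is a `d`-manifold and `ψ : V → ℂ` has nowhere-vanishing real and
imaginary parts on `V`, then for each of the 6 two-element subsets `e` of
`U = {1+i,1-i,-1+i,-1-i}`, the level set `{ψ = 0}_e` is either the empty graph or a
`(d-2)`-manifold. -/
theorem morse_sard_complex_all_flavors {V : Type} (G : FGraph V) (d : ℤ)
    (hG : FGraph.IsManifold d G) (ψ : V → ℂ)
    (hψ : ∀ v ∈ G.verts, (ψ v).re ≠ 0 ∧ (ψ v).im ≠ 0) :
    ∀ e ⊆ signU, e.card = 2 →
      (G.complexLevelSetE ψ e).verts = ∅ ∨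
        FGraph.IsManifold (d - 2) (G.complexLevelSetE ψ e) := by
  intro e _ hcard
  by_cases hE : (G.complexLevelSetE ψ e).verts = ∅
  · exact Or.inl hE
  right
  obtain ⟨ε₁, ε₂, hne, rfl⟩ := Finset.card_eq_two.mp hcard
  obtain ⟨x₀, hx₀⟩ := Finset.nonempty_of_ne_empty hE
  have h₀ := MS.cls_sphere_at G d hG ψ ε₁ ε₂ hne x₀ hx₀
  apply FGraph.IsManifold.intro _ (by omega)
  intro x hx
  have h := MS.cls_sphere_at G d hG ψ ε₁ ε₂ hne x hx
  have harith : d - 2 - 1 = d - 3 := by ring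
  rw [harith]
  exact h.1
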